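/- arXiv:math/0504504 — 4 statements merged into one kernel-verified Lean document; each statement's English description precedes it below -/
import Mathlib

section
/- Let k be a positive integer and let m be an odd positive integer. Then the second group cohomology H²(D₂ₖ, ℤ/m) of the dihedral group D₂ₖ of order 2k with coefficients in ℤ/m endowed with the trivial action is the trivial group. -/
namespace Stmt3

open groupCohomology DihedralGroup

/-- The trivial representation of the dihedral group on `ZMod m`. -/
noncomputable abbrev Triv (k m : ℕ) : Rep ℤ (DihedralGroup k) := Rep.trivial ℤ (DihedralGroup k) (ZMod m)

variable {k m : ℕ}

/-- The values of a 2-cocycle, as honest elements of `ZMod m`. -/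
noncomputable def Fc (f : cocycles₂ (Triv k m)) : DihedralGroup k × DihedralGroup k → ZMod m :=
  fun p => f p

lemma Fc_apply (f : cocycles₂ (Triv k m)) (p : DihedralGroup k × DihedralGroup k) :
    Fc f p = f p := rfl

lemma hco (f : cocycles₂ (Triv k m)) (g h j : DihedralGroup k) :
    Fc f (g * h, j) + Fc f (g, h) = Fc f (h, j) + Fc f (g, h * j) := by
  have := (mem_cocycles₂_iff (A := Triv k m) f).1 f.2 g h j
  simpa [Fc, Rep.trivial_ρ_apply] using this

lemma h1g (f : cocycles₂ (Triv k m)) (g : DihedralGroup k) :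
    Fc f (1, g) = Fc f (1, 1) := by
  simpa [Fc] using cocycles₂_map_one_fst f g

lemma hg1 (f : cocycles₂ (Triv k m)) (g : DihedralGroup k) :
    Fc f (g, 1) = Fc f (1, 1) := by
  simpa [Fc, Rep.trivial_ρ_apply] using cocycles₂_map_one_snd f g

lemma hinvpair (f : cocycles₂ (Triv k m)) (g : DihedralGroup k) :
    Fc f (g⁻¹, g) = Fc f (g, g⁻¹) := by
  have := cocycles₂_ρ_map_inv_sub_map_inv f g
  have h2 := hg1 f g
  simp only [Rep.trivial_ρ_apply] at this
  have : Fc f (g⁻¹, g) - Fc f (g, g⁻¹) = Fc f (1, 1) - Fc f (g, 1) := this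
  rw [h2, sub_self, sub_eq_zero] at this
  exact this

/-- The central extension of the dihedral group determined by a 2-cocycle `f`. -/
@[ext]
structure Ext (f : cocycles₂ (Triv k m)) : Type where
  a : ZMod m
  g : DihedralGroup k

namespace Ext

variable {f : cocycles₂ (Triv k m)}

noncomputable instance : Mul (Ext f) := ⟨fun x y => ⟨x.a + y.a + Fc f (x.g, y.g), x.g * y.g⟩⟩
noncomputable instance : One (Ext f) := ⟨⟨-Fc f (1, 1), 1⟩⟩
noncomputable instance : Inv (Ext f) := ⟨fun x => ⟨-x.a - Fc f (x.g, x.g⁻¹) - Fc f (1, 1), x.g⁻¹⟩⟩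

@[simp] lemma mul_a (x y : Ext f) : (x * y).a = x.a + y.a + Fc f (x.g, y.g) := rfl
@[simp] lemma mul_g (x y : Ext f) : (x * y).g = x.g * y.g := rfl
@[simp] lemma one_a : (1 : Ext f).a = -Fc f (1, 1) := rfl
@[simp] lemma one_g : (1 : Ext f).g = 1 := rfl
@[simp] lemma inv_a (x : Ext f) : x⁻¹.a = -x.a - Fc f (x.g, x.g⁻¹) - Fc f (1, 1) := rfl
@[simp] lemma inv_g (x : Ext f) : x⁻¹.g = x.g⁻¹ := rfl

noncomputable instance : Group (Ext f) where
  mul_assoc x y z := by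
    ext
    · simp only [mul_a, mul_g]
      linear_combination hco f x.g y.g z.g
    · simp [mul_assoc]
  one_mul x := by
    ext
    · simp [h1g f x.g]
    · simp
  mul_one x := by
    ext
    · simp [hg1 f x.g]
    · simp
  inv_mul_cancel x := by
    ext
    · simp only [mul_a, inv_a, inv_g, one_a]
      rw [hinvpair f x.g]
      ring
    · simp

/-- Projection to the dihedral group. -/
def proj (f : cocycles₂ (Triv k m)) : Ext f →* DihedralGroup k where
  toFun := Ext.g
  map_one' := rfl
  map_mul' _ _ := rfl

lemma central_mul (d : ZMod m) (x : Ext f) :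
    (⟨d, 1⟩ : Ext f) * x = x * ⟨d, 1⟩ := by
  ext
  · simp [h1g f x.g, hg1 f x.g]; ring
  · simp

end Ext

lemma cocycle_is_coboundary (hk : 0 < k) (hm : 0 < m) (hodd : Odd m)
    (f : cocycles₂ (Triv k m)) : ⇑f ∈ coboundaries₂ (Triv k m) := by
  haveI : NeZero k := ⟨hk.ne'⟩
  -- 2 is invertible in ZMod m
  have hcop : Nat.Coprime 2 m :=
    (Nat.prime_two.coprime_iff_not_dvd).2 (by
      rw [Nat.odd_iff] at hodd; omega)
  set w : (ZMod m)ˣ := ZMod.unitOfCoprime 2 hcop with hw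
  set u : ZMod m := ↑w⁻¹ with hudef
  have hu : (2 : ZMod m) * u = 1 := by
    have h2 : ((w : ZMod m)) = 2 := by
      rw [hw, ZMod.coe_unitOfCoprime]; norm_num
    rw [← h2, hudef]
    exact_mod_cast w.mul_inv
  set c0 : ZMod m := Fc f (1, 1) with hc0
  -- the adjusted lifts
  set y : ZMod m := u * (-c0 - Fc f (sr 0, sr 0)) with hy
  set S : Ext f := ⟨y, sr 0⟩ with hSdef
  have hS : S * S = 1 := by
    ext
    · simp only [Ext.mul_a, Ext.mul_g, Ext.one_a, hSdef]
      show y + y + Fc f (sr 0, sr 0) = -c0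
      rw [hy]; ring_nf
      linear_combination (-c0 - Fc f (sr 0, sr 0)) * hu
    · show sr 0 * sr 0 = 1
      rw [sr_mul_self]
  set x : ZMod m := u * (-c0 - Fc f (sr 1, sr 1)) - y - Fc f (sr 0, r 1) with hx
  set R : Ext f := ⟨x, r 1⟩ with hRdef
  have hSR : (S * R) * (S * R) = 1 := by
    have hSRval : S * R = (⟨u * (-c0 - Fc f (sr 1, sr 1)), sr 1⟩ : Ext f) := by
      ext
      · show y + x + Fc f (sr 0, r 1) = u * (-c0 - Fc f (sr 1, sr 1))
        rw [hx]; ring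
      · show sr 0 * r 1 = sr 1
        rw [sr_mul_r, zero_add]
    rw [hSRval]
    ext
    · show u * (-c0 - Fc f (sr 1, sr 1)) + u * (-c0 - Fc f (sr 1, sr 1)) +
        Fc f (sr 1, sr 1) = -c0
      linear_combination (-c0 - Fc f (sr 1, sr 1)) * hu
    · show sr 1 * sr 1 = 1
      rw [sr_mul_self]
  have hSinv : S⁻¹ = S := inv_eq_of_mul_eq_one_left hS
  have hconj : S * R * S⁻¹ = R⁻¹ := by
    rw [hSinv]
    have h1 : (S * R * S) * R = 1 := by rw [mul_assoc (S * R) S R]; exact hSR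
    exact eq_inv_of_mul_eq_one_left h1
  have hconjn : ∀ n : ℤ, S * R ^ n * S⁻¹ = R ^ (-n) := by
    intro n
    have h1 := map_zpow (MulAut.conj S) R n
    simp only [MulAut.conj_apply] at h1
    rw [h1, hconj, inv_zpow, zpow_neg]
  have hRS : ∀ n : ℤ, R ^ n * S = S * R ^ (-n) := by
    intro n
    have h1 := hconjn (-n)
    rw [neg_neg] at h1
    calc R ^ n * S = (S * R ^ (-n) * S⁻¹) * S := by rw [h1]
    _ = S * R ^ (-n) := by rw [inv_mul_cancel_right]
  -- R has order dividing k
  have hRk : R ^ (k : ℤ) = 1 := by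
    have hg1' : (R ^ (k : ℤ)).g = 1 := by
      have : (R ^ (k : ℤ)).g = Ext.proj f (R ^ (k : ℤ)) := rfl
      rw [this, map_zpow]
      show ((r 1 : DihedralGroup k)) ^ (k : ℤ) = 1
      rw [zpow_natCast, r_one_pow_n]
    set d : ZMod m := (R ^ (k : ℤ)).a with hd
    have hdR : R ^ (k : ℤ) = (⟨d, 1⟩ : Ext f) := by
      ext
      · rfl
      · exact hg1'
    have hcent : S * (⟨d, 1⟩ : Ext f) * S⁻¹ = (⟨d, 1⟩ : Ext f) := by
      rw [← Ext.central_mul d S, mul_inv_cancel_right]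
    have hflip : (⟨d, 1⟩ : Ext f) = (⟨d, 1⟩ : Ext f)⁻¹ := by
      have h1 := hconjn (k : ℤ)
      rw [hdR, hcent, zpow_neg, hdR] at h1
      exact h1
    have hsq : (⟨d, 1⟩ : Ext f) * (⟨d, 1⟩ : Ext f) = 1 := by
      nth_rewrite 2 [hflip]
      exact mul_inv_cancel _
    have h2d : d + d + Fc f (1, 1) = -Fc f (1, 1) := congrArg Ext.a hsq
    have hdval : d = -c0 := by
      rw [← hc0] at h2d
      linear_combination u * h2d - (d + c0) * hu
    rw [hdR, hdval]
    ext
    · show -c0 = -Fc f (1, 1); rw [hc0]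
    · rfl
  have hzR : ∀ a b : ℤ, ((a : ZMod k) = (b : ZMod k)) → R ^ a = R ^ b := by
    intro a b hab
    have hdvd : (k : ℤ) ∣ a - b := by
      rwa [← ZMod.intCast_zmod_eq_zero_iff_dvd, Int.cast_sub, sub_eq_zero]
    obtain ⟨t, ht⟩ := hdvd
    have : a = b + (k : ℤ) * t := by omega
    rw [this, zpow_add, zpow_mul, hRk, one_zpow, mul_one]
  have hval : ∀ (n : ℤ) (i : ZMod k), ((n : ZMod k) = i) → R ^ n = R ^ (i.val : ℤ) := by
    intro n i hn
    apply hzR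
    rw [hn]
    push_cast
    rw [ZMod.natCast_val, ZMod.cast_id]
  -- the splitting
  set σ : DihedralGroup k → Ext f := fun g =>
    match g with
    | .r i => R ^ (i.val : ℤ)
    | .sr i => S * R ^ (i.val : ℤ) with hσ
  have hσr : ∀ i : ZMod k, σ (r i) = R ^ (i.val : ℤ) := fun _ => rfl
  have hσs : ∀ i : ZMod k, σ (sr i) = S * R ^ (i.val : ℤ) := fun _ => rfl
  have hmul : ∀ g h : DihedralGroup k, σ g * σ h = σ (g * h) := by
    intro g h
    cases g with
    | r i =>
      cases h with
      | r j =>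
        rw [r_mul_r, hσr, hσr, hσr, ← zpow_add]
        apply hval
        push_cast
        rw [ZMod.natCast_val, ZMod.cast_id, ZMod.natCast_val, ZMod.cast_id]
      | sr j =>
        rw [r_mul_sr, hσr, hσs, hσs, ← mul_assoc, hRS, mul_assoc, ← zpow_add]
        congr 1
        apply hval
        push_cast
        rw [ZMod.natCast_val, ZMod.cast_id, ZMod.natCast_val, ZMod.cast_id]
        ring
    | sr i =>
      cases h with
      | r j =>
        rw [sr_mul_r, hσs, hσr, hσs, mul_assoc, ← zpow_add]
        congr 1
        apply hval
        push_cast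
        rw [ZMod.natCast_val, ZMod.cast_id, ZMod.natCast_val, ZMod.cast_id]
      | sr j =>
        rw [sr_mul_sr, hσs, hσs, hσr]
        calc (S * R ^ (i.val : ℤ)) * (S * R ^ (j.val : ℤ))
            = S * (R ^ (i.val : ℤ) * S) * R ^ (j.val : ℤ) := by group
          _ = S * (S * R ^ (-(i.val : ℤ))) * R ^ (j.val : ℤ) := by rw [hRS]
          _ = (S * S) * (R ^ (-(i.val : ℤ)) * R ^ (j.val : ℤ)) := by group
          _ = R ^ (-(i.val : ℤ) + (j.val : ℤ)) := by rw [hS, one_mul, ← zpow_add]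
          _ = R ^ (((j - i).val : ℤ)) := by
              apply hval
              push_cast
              rw [ZMod.natCast_val, ZMod.cast_id, ZMod.natCast_val, ZMod.cast_id]
              ring
  have hproj : ∀ g : DihedralGroup k, (σ g).g = g := by
    have hRn : ∀ n : ℤ, (R ^ n).g = (r 1 : DihedralGroup k) ^ n := by
      intro n
      have : (R ^ n).g = Ext.proj f (R ^ n) := rfl
      rw [this, map_zpow]; rfl
    intro g
    cases g with
    | r i =>
      rw [hσr, hRn, zpow_natCast, r_one_pow, ZMod.natCast_val, ZMod.cast_id]
    | sr i =>
      rw [hσs]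
      show (S.g) * (R ^ (i.val : ℤ)).g = sr i
      rw [hRn, zpow_natCast, r_one_pow]
      show sr 0 * r (i.val : ZMod k) = sr i
      rw [sr_mul_r, zero_add, ZMod.natCast_val, ZMod.cast_id]
  rw [coboundaries₂, LinearMap.mem_range]
  refine ⟨fun g => -(σ g).a, funext fun p => ?_⟩
  obtain ⟨g, h⟩ := p
  have h1 : (σ g).a + (σ h).a + Fc f ((σ g).g, (σ h).g) = (σ (g * h)).a :=
    congrArg Ext.a (hmul g h)
  rw [hproj g, hproj h] at h1
  show -(σ h).a - -(σ (g * h)).a + -(σ g).a = Fc f (g, h)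
  linear_combination -h1

end Stmt3

/-- Let `k` be a positive integer and `m` an odd positive integer. Then the
second group cohomology `H²(D₂ₖ, ℤ/m)` of the dihedral group of order `2k` with coefficients
in `ℤ/m` (trivial action) is the trivial group. -/
theorem stmt_3 (k m : ℕ) (hk : 0 < k) (hm : 0 < m) (hodd : Odd m) :
    Subsingleton (groupCohomology (Rep.trivial ℤ (DihedralGroup k) (ZMod m)) 2) := by
  have hsub : ∀ x : groupCohomology.H2 (Stmt3.Triv k m), x = 0 := fun x =>
    groupCohomology.H2_induction_on x fun f =>
      (groupCohomology.H2π_eq_zero_iff f).2 (Stmt3.cocycle_is_coboundary hk hm hodd f)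
  exact ⟨fun a b => (hsub a).trans (hsub b).symm⟩
end

section
/- Let k be an odd positive integer and m any positive integer. Then the second group cohomology H²(D₂ₖ, ℤ/m) of the dihedral group D₂ₖ of order 2k with coefficients in ℤ/m endowed with the trivial action is isomorphic, as an abelian group, to ℤ/gcd(m,2). -/
namespace Stmt4Aux

/-! ### Normalized 2-cocycles and the associated central extension -/

structure NC (G : Type*) [Group G] (M : Type*) [AddCommGroup M] where
  F : G → G → M
  coc : ∀ g h l, F g h + F (g * h) l = F h l + F g (h * l)
  norm : F 1 1 = 0

namespace NC

variable {G : Type*} [Group G] {M : Type*} [AddCommGroup M] (c : NC G M)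

lemma one_fst (g : G) : c.F 1 g = 0 := by
  have h := c.coc 1 1 g
  simp only [one_mul, c.norm, zero_add] at h
  exact (left_eq_add.mp h)

lemma one_snd (g : G) : c.F g 1 = 0 := by
  have h := c.coc g 1 1
  simp only [mul_one, one_mul, c.norm, zero_add] at h
  exact add_eq_right.mp h

lemma inv_rel (g : G) : c.F g⁻¹ g = c.F g g⁻¹ := by
  have h := c.coc g⁻¹ g g⁻¹
  simp only [inv_mul_cancel, mul_inv_cancel, one_fst, one_snd, add_zero, zero_add] at h
  exact h

/-- The central extension of `G` by `M` determined by the cocycle `c`. -/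
@[ext]
structure Ext (_c : NC G M) where
  a : M
  g : G

variable {c}

instance : One (Ext c) := ⟨⟨(0 : M), (1 : G)⟩⟩
instance : Mul (Ext c) := ⟨fun x y => ⟨x.a + y.a + c.F x.g y.g, x.g * y.g⟩⟩
instance : Inv (Ext c) := ⟨fun x => ⟨-x.a - c.F x.g x.g⁻¹, x.g⁻¹⟩⟩

lemma mul_def (x y : Ext c) : x * y = ⟨x.a + y.a + c.F x.g y.g, x.g * y.g⟩ := rfl
lemma one_def' : (1 : Ext c) = ⟨(0 : M), (1 : G)⟩ := rfl
lemma inv_def (x : Ext c) : x⁻¹ = ⟨-x.a - c.F x.g x.g⁻¹, x.g⁻¹⟩ := rfl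

@[simp] lemma mul_a (x y : Ext c) : (x * y).a = x.a + y.a + c.F x.g y.g := rfl
@[simp] lemma mul_g (x y : Ext c) : (x * y).g = x.g * y.g := rfl
@[simp] lemma one_a : (1 : Ext c).a = 0 := rfl
@[simp] lemma one_g : (1 : Ext c).g = 1 := rfl

instance : Group (Ext c) where
  mul_assoc x y z := by
    have h := c.coc x.g y.g z.g
    refine Ext.ext ?_ (mul_assoc _ _ _)
    show x.a + y.a + c.F x.g y.g + z.a + c.F (x.g * y.g) z.g
        = x.a + (y.a + z.a + c.F y.g z.g) + c.F x.g (y.g * z.g)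
    calc x.a + y.a + c.F x.g y.g + z.a + c.F (x.g * y.g) z.g
        = (x.a + y.a + z.a) + (c.F x.g y.g + c.F (x.g * y.g) z.g) := by abel
      _ = (x.a + y.a + z.a) + (c.F y.g z.g + c.F x.g (y.g * z.g)) := by rw [h]
      _ = x.a + (y.a + z.a + c.F y.g z.g) + c.F x.g (y.g * z.g) := by abel
  one_mul x := by
    refine Ext.ext ?_ (one_mul _)
    show (0 : M) + x.a + c.F 1 x.g = x.a
    rw [c.one_fst, zero_add, add_zero]
  mul_one x := by
    refine Ext.ext ?_ (mul_one _)
    show x.a + 0 + c.F x.g 1 = x.a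
    rw [c.one_snd, add_zero, add_zero]
  inv_mul_cancel x := by
    refine Ext.ext ?_ (inv_mul_cancel _)
    show -x.a - c.F x.g x.g⁻¹ + x.a + c.F x.g⁻¹ x.g = 0
    rw [c.inv_rel]
    abel

lemma cen_mul (a : M) (y : Ext c) : (⟨a, 1⟩ : Ext c) * y = ⟨a + y.a, y.g⟩ := by
  refine Ext.ext ?_ (one_mul _)
  show a + y.a + c.F 1 y.g = a + y.a
  rw [c.one_fst, add_zero]

lemma mul_cen (a : M) (y : Ext c) : y * (⟨a, 1⟩ : Ext c) = ⟨a + y.a, y.g⟩ := by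
  refine Ext.ext ?_ (mul_one _)
  show y.a + a + c.F y.g 1 = a + y.a
  rw [c.one_snd, add_zero, add_comm]

lemma commute_cen (a : M) (y : Ext c) : Commute (⟨a, 1⟩ : Ext c) y := by
  show _ * _ = _ * _
  rw [cen_mul, mul_cen]

lemma cen_pow (a : M) (n : ℕ) : (⟨a, 1⟩ : Ext c) ^ n = (⟨n • a, 1⟩ : Ext c) := by
  induction n with
  | zero => rw [pow_zero, zero_smul]; rfl
  | succ n ih =>
      rw [pow_succ, ih, mul_def]
      refine Ext.ext ?_ (one_mul _)
      show n • a + a + c.F 1 1 = (n + 1) • a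
      rw [c.norm, add_zero, succ_nsmul]

lemma cen_inv (a : M) : (⟨a, 1⟩ : Ext c)⁻¹ = (⟨-a, 1⟩ : Ext c) := by
  rw [inv_def]
  refine Ext.ext ?_ inv_one
  show -a - c.F 1 1⁻¹ = -a
  rw [inv_one, c.norm, sub_zero]

lemma g_pow (x : Ext c) (n : ℕ) : (x ^ n).g = x.g ^ n := by
  induction n with
  | zero => rw [pow_zero, pow_zero]; rfl
  | succ n ih => rw [pow_succ, pow_succ, ← ih]; rfl

lemma sq_cen_mul (a : M) (P : Ext c) :
    ((⟨a, 1⟩ : Ext c) * P) * ((⟨a, 1⟩ : Ext c) * P) = (⟨a + a, 1⟩ : Ext c) * (P * P) := by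
  have h : P * ((⟨a, 1⟩ : Ext c) * P) = (⟨a, 1⟩ : Ext c) * (P * P) := by
    rw [← mul_assoc, ← (commute_cen a P).eq, mul_assoc]
  rw [mul_assoc, h, ← mul_assoc, cen_mul, cen_mul]

end NC

/-! ### The dihedral splitting criterion -/

open DihedralGroup in
/-- The canonical map `DihedralGroup k → E` determined by images `R`, `S` of `r 1`, `sr 0`. -/
def dmap {k : ℕ} {E : Type*} [Group E] (R S : E) : DihedralGroup k → E
  | .r i => R ^ i.val
  | .sr i => S * R ^ i.val

open DihedralGroup in
lemma dmap_mul {k : ℕ} [NeZero k] {E : Type*} [Group E] {R S : E}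
    (hR : R ^ k = 1) (hS : S * S = 1) (hSR : (S * R) * (S * R) = 1) (g h : DihedralGroup k) :
    dmap R S (g * h) = dmap R S g * dmap R S h := by
  have hSinv : S⁻¹ = S := inv_eq_of_mul_eq_one_right hS
  have hconj : S * R * S = R⁻¹ := by
    have h1 : (S * R * S) * R = 1 := by rw [← hSR]; group
    exact eq_inv_of_mul_eq_one_left h1
  have hordvd : orderOf R ∣ k := orderOf_dvd_of_pow_eq_one hR
  have hpow : ∀ i j : ZMod k, R ^ (i + j).val = R ^ i.val * R ^ j.val := by
    intro i j
    rw [← pow_add, pow_eq_pow_iff_modEq]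
    refine Nat.ModEq.of_dvd hordvd ?_
    rw [ZMod.val_add]
    exact (Nat.mod_modEq _ _)
  have hneg : ∀ i : ZMod k, R ^ (-i).val = (R ^ i.val)⁻¹ := by
    intro i
    have h1 := hpow (-i) i
    rw [neg_add_cancel] at h1
    rw [ZMod.val_zero, pow_zero] at h1
    exact eq_inv_of_mul_eq_one_left h1.symm
  have hconjn : ∀ n : ℕ, S * R ^ n * S = (R ^ n)⁻¹ := by
    intro n
    have h1 : (S * R * S⁻¹) ^ n = S * R ^ n * S⁻¹ := conj_pow
    rw [hSinv, hconj, inv_pow] at h1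
    exact h1.symm
  have hcomm : ∀ n : ℕ, R ^ n * S = S * (R ^ n)⁻¹ := by
    intro n
    rw [← hconjn n]
    calc R ^ n * S = (S * S) * (R ^ n * S) := by rw [hS, one_mul]
      _ = S * (S * R ^ n * S) := by group
  rcases g with i | i <;> rcases h with j | j
  · show dmap R S (r i * r j) = R ^ i.val * R ^ j.val
    rw [r_mul_r]
    exact hpow i j
  · show dmap R S (r i * sr j) = R ^ i.val * (S * R ^ j.val)
    rw [r_mul_sr]
    show S * R ^ (j - i).val = _
    calc S * R ^ (j - i).val = S * R ^ ((-i) + j).val := by rw [sub_eq_neg_add]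
      _ = S * (R ^ (-i).val * R ^ j.val) := by rw [hpow]
      _ = (S * (R ^ i.val)⁻¹) * R ^ j.val := by rw [hneg, mul_assoc]
      _ = (R ^ i.val * S) * R ^ j.val := by rw [hcomm]
      _ = R ^ i.val * (S * R ^ j.val) := by rw [mul_assoc]
  · show dmap R S (sr i * r j) = (S * R ^ i.val) * R ^ j.val
    rw [sr_mul_r]
    show S * R ^ (i + j).val = _
    rw [hpow, mul_assoc]
  · show dmap R S (sr i * sr j) = (S * R ^ i.val) * (S * R ^ j.val)
    rw [sr_mul_sr]
    show R ^ (j - i).val = _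
    calc R ^ (j - i).val = R ^ ((-i) + j).val := by rw [sub_eq_neg_add]
      _ = R ^ (-i).val * R ^ j.val := hpow _ _
      _ = (R ^ i.val)⁻¹ * R ^ j.val := by rw [hneg]
      _ = (S * R ^ i.val * S) * R ^ j.val := by rw [hconjn]
      _ = (S * R ^ i.val) * (S * R ^ j.val) := by group

end Stmt4Aux

namespace Stmt4Aux

open DihedralGroup NC in
theorem exists_cobound {k : ℕ} [NeZero k] (hk : Odd k) {M : Type*} [AddCommGroup M]
    (c : NC (DihedralGroup k) M) (y : M)
    (hw : c.F (sr 0) (sr 0) = y + y) :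
    ∃ φ : DihedralGroup k → M, ∀ g h, c.F g h = φ g + φ h - φ (g * h) := by
  classical
  set R₀ : Ext c := ⟨0, r 1⟩ with hR₀def
  set S₀ : Ext c := ⟨0, sr 0⟩ with hS₀def
  have hsrinv : (sr 0 : DihedralGroup k)⁻¹ = sr 0 :=
    inv_eq_of_mul_eq_one_right (sr_mul_self 0)
  -- R₀ ^ k is central
  have hR₀k : R₀ ^ k = (⟨(R₀ ^ k).a, 1⟩ : Ext c) := by
    refine Ext.ext rfl ?_
    rw [g_pow, hR₀def]
    exact r_one_pow_n
  set z : M := (R₀ ^ k).a with hzdef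
  -- the element u
  have hug : (S₀ * R₀ * S₀⁻¹ * R₀).g = 1 := by
    rw [mul_g, mul_g, mul_g]
    show (sr 0 * r 1 * (sr 0)⁻¹ * r 1 : DihedralGroup k) = 1
    rw [hsrinv, sr_mul_r, sr_mul_sr, r_mul_r, zero_add, zero_sub, neg_add_cancel, one_def]
  set u : M := (S₀ * R₀ * S₀⁻¹ * R₀).a with hudef
  have huu : S₀ * R₀ * S₀⁻¹ * R₀ = (⟨u, 1⟩ : Ext c) := Ext.ext rfl hug
  have hconj₀ : S₀ * R₀ * S₀⁻¹ = (⟨u, 1⟩ : Ext c) * R₀⁻¹ := eq_mul_inv_of_mul_eq huu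
  -- S₀ squared
  set w : M := c.F (sr 0) (sr 0) with hwdef
  have hS₀sq : S₀ * S₀ = (⟨w, 1⟩ : Ext c) := by
    refine Ext.ext ?_ ?_
    · show (0 : M) + 0 + c.F (sr 0) (sr 0) = w
      rw [zero_add, zero_add]
    · exact sr_mul_self 0
  -- key relation : k • u = z + z
  have key1 : k • u = z + z := by
    have e1 : S₀ * R₀ ^ k * S₀⁻¹ = (⟨z, 1⟩ : Ext c) := by
      rw [hR₀k, ← (commute_cen z S₀).eq, mul_assoc, mul_inv_cancel, mul_one]
    have e2 : S₀ * R₀ ^ k * S₀⁻¹ = (⟨k • u - z, 1⟩ : Ext c) := by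
      have hc : S₀ * R₀ ^ k * S₀⁻¹ = (S₀ * R₀ * S₀⁻¹) ^ k := conj_pow.symm
      rw [hc, hconj₀, (commute_cen u R₀⁻¹).mul_pow, cen_pow, inv_pow, hR₀k, cen_inv, cen_mul]
      refine Ext.ext ?_ rfl
      show k • u + -z = k • u - z
      rw [sub_eq_add_neg]
    have e3 := congrArg Ext.a (e1.symm.trans e2)
    have e4 : z = k • u - z := e3
    rw [eq_sub_iff_add_eq] at e4
    exact e4.symm
  obtain ⟨n, hn⟩ := hk
  set t : ℕ := n + 1 with htdef
  have htt : t + t = k + 1 := by omega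
  set α : M := z - t • u with hαdef
  set β : M := -y with hβdef
  set R' : Ext c := (⟨α, 1⟩ : Ext c) * R₀ with hR'def
  set S' : Ext c := (⟨β, 1⟩ : Ext c) * S₀ with hS'def
  -- scalar identities
  have hkα : k • α + z = 0 := by
    have h1 : k • α = k • z - t • (k • u) := by
      rw [hαdef, smul_sub, smul_comm]
    have h3 : t • (k • u) = t • z + t • z := by rw [key1, smul_add]
    have h4 : t • z + t • z = k • z + z := by rw [← add_nsmul, htt, succ_nsmul]
    rw [h1, h3, h4]
    abel
  have hαα : α + α + u = 0 := by
    have h1 : α + α + u = (z + z) - (t • u + t • u) + u := by rw [hαdef]; abel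
    have h2 : t • u + t • u = k • u + u := by rw [← add_nsmul, htt, succ_nsmul]
    rw [h1, h2, ← key1]
    abel
  -- relations for R', S'
  have hR'k : R' ^ k = 1 := by
    rw [hR'def, (commute_cen α R₀).mul_pow, cen_pow, hR₀k, cen_mul]
    exact Ext.ext hkα rfl
  have hS'2 : S' * S' = 1 := by
    rw [hS'def, sq_cen_mul, hS₀sq, cen_mul]
    refine Ext.ext ?_ rfl
    show β + β + w = 0
    rw [hβdef, hw]
    abel
  have hSR2 : (S' * R') * (S' * R') = 1 := by
    have hmix : S' * R' = (⟨β + α, 1⟩ : Ext c) * (S₀ * R₀) := by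
      rw [hS'def, hR'def]
      rw [mul_assoc, ← mul_assoc S₀, (commute_cen α S₀).eq.symm, mul_assoc, ← mul_assoc,
        cen_mul, cen_mul]
    -- (S₀R₀)² = u + w
    have hsq : (S₀ * R₀) * (S₀ * R₀) = (⟨u + w, 1⟩ : Ext c) := by
      have hS₀' : S₀ = S₀⁻¹ * (⟨w, 1⟩ : Ext c) := eq_inv_mul_of_mul_eq hS₀sq
      calc (S₀ * R₀) * (S₀ * R₀)
          = S₀ * R₀ * ((S₀⁻¹ * (⟨w, 1⟩ : Ext c)) * R₀) := by rw [← hS₀']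
        _ = S₀ * R₀ * (S₀⁻¹ * (R₀ * (⟨w, 1⟩ : Ext c))) := by
              rw [mul_assoc S₀⁻¹, (commute_cen w R₀).eq]
        _ = (S₀ * R₀ * S₀⁻¹ * R₀) * (⟨w, 1⟩ : Ext c) := by group
        _ = (⟨u, 1⟩ : Ext c) * (⟨w, 1⟩ : Ext c) := by rw [huu]
        _ = (⟨u + w, 1⟩ : Ext c) := by rw [cen_mul]
    rw [hmix, sq_cen_mul, hsq, cen_mul]
    refine Ext.ext ?_ rfl
    show β + α + (β + α) + (u + w) = 0
    have : β + α + (β + α) + (u + w) = (α + α + u) + (β + β + w) := by abel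
    rw [this, hαα, hβdef, hw]
    abel
  -- the splitting homomorphism
  have hdm := fun g h => dmap_mul hR'k hS'2 hSR2 (R := R') (S := S') g h
  -- second components
  have hR'g : R'.g = r 1 := by rw [hR'def, mul_g]; show (1 : DihedralGroup k) * r 1 = r 1; group
  have hS'g : S'.g = sr 0 := by rw [hS'def, mul_g]; show (1 : DihedralGroup k) * sr 0 = sr 0; group
  have hsnd : ∀ g : DihedralGroup k, (dmap R' S' g).g = g := by
    intro g
    rcases g with i | i
    · show (R' ^ i.val).g = r i
      rw [g_pow, hR'g, r_one_pow, ZMod.natCast_rightInverse i]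
    · show (S' * R' ^ i.val).g = sr i
      rw [mul_g, g_pow, hR'g, hS'g, r_one_pow, ZMod.natCast_rightInverse i, sr_mul_r, zero_add]
  refine ⟨fun g => -(dmap R' S' g).a, fun g h => ?_⟩
  have h1 := congrArg Ext.a (hdm g h)
  rw [mul_a, hsnd g, hsnd h] at h1
  show c.F g h = -(dmap R' S' g).a + -(dmap R' S' h).a - -(dmap R' S' (g * h)).a
  rw [h1]
  abel

end Stmt4Aux

namespace Stmt4Aux

/-! ### Division by 2 in `ZMod m` -/

lemma castzero {m : ℕ} (hm : 0 < m) (x : ZMod m)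
    (hx : ZMod.castHom (Nat.gcd_dvd_left m 2) (ZMod (Nat.gcd m 2)) x = 0) :
    ∃ y : ZMod m, x = y + y := by
  haveI : NeZero m := ⟨hm.ne'⟩
  rcases Nat.even_or_odd m with he | ho
  · have h2dvd : 2 ∣ m := he.two_dvd
    have h2 : Nat.gcd m 2 = 2 := Nat.gcd_eq_right h2dvd
    have hv : ((x.val : ℕ) : ZMod (Nat.gcd m 2)) = 0 := by
      calc ((x.val : ℕ) : ZMod (Nat.gcd m 2)) = ZMod.cast x := ZMod.natCast_val x
        _ = ZMod.castHom (Nat.gcd_dvd_left m 2) (ZMod (Nat.gcd m 2)) x :=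
            (ZMod.castHom_apply x).symm
        _ = 0 := hx
    have hdvd : Nat.gcd m 2 ∣ x.val := (ZMod.natCast_eq_zero_iff _ _).mp hv
    rw [h2] at hdvd
    obtain ⟨e, hev⟩ := hdvd
    refine ⟨(e : ZMod m), ?_⟩
    have hxv : ((x.val : ℕ) : ZMod m) = x := ZMod.natCast_rightInverse x
    rw [← hxv, hev]
    push_cast
    ring
  · obtain ⟨d, hd⟩ := ho
    refine ⟨((d + 1 : ℕ) : ZMod m) * x, ?_⟩
    have h1 : (((d + 1) + (d + 1) : ℕ) : ZMod m) = 1 := by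
      have he : ((d + 1) + (d + 1) : ℕ) = m + 1 := by omega
      rw [he]
      push_cast [ZMod.natCast_self]
      ring
    calc x = (((d + 1) + (d + 1) : ℕ) : ZMod m) * x := by rw [h1, one_mul]
      _ = ((d + 1 : ℕ) : ZMod m) * x + ((d + 1 : ℕ) : ZMod m) * x := by push_cast; ring

/-! ### The generating cocycle -/

def sgn {k : ℕ} : DihedralGroup k → Bool
  | .r _ => false
  | .sr _ => true

lemma sgn_mul {k : ℕ} (g h : DihedralGroup k) : sgn (g * h) = ((sgn g).xor (sgn h)) := by
  rcases g with i | i <;> rcases h with j | j <;>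
    simp [sgn, DihedralGroup.r_mul_r, DihedralGroup.r_mul_sr, DihedralGroup.sr_mul_r,
      DihedralGroup.sr_mul_sr]

def fgen (k m : ℕ) : DihedralGroup k × DihedralGroup k → ZMod m :=
  fun p => cond (sgn p.1 && sgn p.2) 1 0

lemma fgen_mem (k m : ℕ) :
    fgen k m ∈ groupCohomology.cocycles₂ (Rep.trivial ℤ (DihedralGroup k) (ZMod m)) := by
  rw [groupCohomology.mem_cocycles₂_iff]
  intro g h j
  show fgen k m (g * h, j) + fgen k m (g, h) = fgen k m (h, j) + fgen k m (g, h * j)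
  unfold fgen
  simp only [sgn_mul]
  cases sgn g <;> cases sgn h <;> cases sgn j <;> simp

lemma sgn_sr0 {k : ℕ} : sgn (DihedralGroup.sr 0 : DihedralGroup k) = true := rfl
lemma sgn_one {k : ℕ} : sgn (1 : DihedralGroup k) = false := rfl

lemma mem_cob {k m : ℕ} (f : DihedralGroup k × DihedralGroup k → ZMod m) :
    f ∈ groupCohomology.coboundaries₂ (Rep.trivial ℤ (DihedralGroup k) (ZMod m)) ↔
      ∃ x : DihedralGroup k → ZMod m, ∀ g h : DihedralGroup k,
        (Rep.trivial ℤ (DihedralGroup k) (ZMod m)).ρ g (x h) - x (g * h) + x g = f (g, h) := by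
  simp only [groupCohomology.coboundaries₂, LinearMap.mem_range, funext_iff,
    groupCohomology.d₁₂_hom_apply, Prod.forall]

end Stmt4Aux

section
open Stmt4Aux groupCohomology

/-- Let `k` be an odd positive integer and `m` any positive integer. Then the
second group cohomology `H²(D₂ₖ, ℤ/m)` of the dihedral group of order `2k` with coefficients
in `ℤ/m` (trivial action) is isomorphic, as an abelian group, to `ℤ/gcd(m, 2)`. -/
theorem stmt_4 (k m : ℕ) (hk : 0 < k) (hkodd : Odd k) (hm : 0 < m) :
    Nonempty
      ((groupCohomology (Rep.trivial ℤ (DihedralGroup k) (ZMod m)) 2) ≃+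
        ZMod (Nat.gcd m 2)) := by
  haveI : NeZero k := ⟨hk.ne'⟩
  haveI : NeZero m := ⟨hm.ne'⟩
  haveI : NeZero (Nat.gcd m 2) := ⟨(Nat.gcd_pos_of_pos_left 2 hm).ne'⟩
  set A := Rep.trivial ℤ (DihedralGroup k) (ZMod m) with hA
  set s : DihedralGroup k := DihedralGroup.sr 0 with hs
  let π2 : ZMod m →+* ZMod (Nat.gcd m 2) := ZMod.castHom (Nat.gcd_dvd_left m 2) _
  have two0 : (2 : ZMod (Nat.gcd m 2)) = 0 := by
    have h2 : ((2 : ℕ) : ZMod (Nat.gcd m 2)) = 0 :=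
      (ZMod.natCast_eq_zero_iff 2 _).mpr (Nat.gcd_dvd_right m 2)
    simpa using h2
  -- the evaluation homomorphism on 2-cocycles
  let B : Submodule ℤ (cocycles₂ A) := (coboundaries₂ A).comap (cocycles₂ A).subtype
  let Φ₀ : cocycles₂ A →+ ZMod (Nat.gcd m 2) :=
    AddMonoidHom.mk' (fun f => π2 (f (s, s) - f (1, 1))) (by
      intro f1 f2
      show π2 ((f1 (s, s) + f2 (s, s)) - (f1 (1, 1) + f2 (1, 1)))
          = π2 (f1 (s, s) - f1 (1, 1)) + π2 (f2 (s, s) - f2 (1, 1))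
      rw [← map_add]
      congr 1
      ring)
  have hs2 : s * s = 1 := DihedralGroup.sr_mul_self 0
  -- it kills coboundaries
  have hρ : ∀ (g : DihedralGroup k) (v : A), A.ρ g v = v := fun g v => rfl
  have hker : B ≤ LinearMap.ker Φ₀.toIntLinearMap := by
    intro f hf
    obtain ⟨x, hx⟩ := (mem_cob (f : DihedralGroup k × DihedralGroup k → ZMod m)).mp hf
    let x' : DihedralGroup k → ZMod m := x
    let fv : DihedralGroup k × DihedralGroup k → ZMod m := ↑f
    have hss : x' s - x' 1 + x' s = fv (s, s) := by
      have h0 := hx s s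
      rw [hρ, hs2] at h0
      exact h0
    have h11 : x' 1 - x' 1 + x' 1 = fv (1, 1) := by
      have h0 := hx 1 1
      rw [hρ, mul_one] at h0
      exact h0
    rw [LinearMap.mem_ker]
    show π2 (fv (s, s) - fv (1, 1)) = 0
    rw [← hss, ← h11]
    have hc : (x' s - x' 1 + x' s) - (x' 1 - x' 1 + x' 1) = (2 : ZMod m) * (x' s - x' 1) := by
      ring
    rw [hc, map_mul, map_ofNat, two0, zero_mul]
  -- the induced map on H2
  let Φ : (cocycles₂ A ⧸ B) →ₗ[ℤ] ZMod (Nat.gcd m 2) := B.liftQ Φ₀.toIntLinearMap hker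
  -- injectivity
  have hinj0 : ∀ f : cocycles₂ A, Φ₀ f = 0 → f ∈ B := by
    intro f hf
    let fv : DihedralGroup k × DihedralGroup k → ZMod m := ↑f
    have hcoc : ∀ g h j : DihedralGroup k,
        fv (g * h, j) + fv (g, h) = fv (h, j) + fv (g, h * j) := by
      intro g h j
      have h1 := (mem_cocycles₂_iff (f : _)).mp f.2 g h j
      rw [hρ] at h1
      exact h1
    have hncoc : ∀ g h l : DihedralGroup k,
        (fv (g, h) - fv (1, 1)) + (fv (g * h, l) - fv (1, 1))
          = (fv (h, l) - fv (1, 1)) + (fv (g, h * l) - fv (1, 1)) := by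
      intro g h l
      have h1 := hcoc g h l
      linear_combination h1
    let c : NC (DihedralGroup k) (ZMod m) :=
      ⟨fun g h => fv (g, h) - fv (1, 1), hncoc, sub_self _⟩
    have hfΦ : π2 (fv (s, s) - fv (1, 1)) = 0 := hf
    obtain ⟨y, hy⟩ := castzero hm (fv (s, s) - fv (1, 1)) hfΦ
    obtain ⟨φ, hφ⟩ := exists_cobound hkodd c y hy
    show (f : DihedralGroup k × DihedralGroup k → ZMod m) ∈ coboundaries₂ A
    refine (mem_cob _).mpr ⟨fun g => φ g + fv (1, 1), ?_⟩
    intro g h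
    rw [hρ]
    have h2 := hφ g h
    show (φ h + fv (1, 1)) - (φ (g * h) + fv (1, 1)) + (φ g + fv (1, 1)) = fv (g, h)
    linear_combination -h2
  have hinj : Function.Injective Φ := by
    rw [injective_iff_map_eq_zero]
    intro q hq
    obtain ⟨f, rfl⟩ := Submodule.Quotient.mk_surjective _ q
    rw [Submodule.liftQ_apply] at hq
    exact (Submodule.Quotient.mk_eq_zero _).mpr (hinj0 f hq)
  -- surjectivity
  have hgen : Φ (Submodule.Quotient.mk ⟨fgen k m, fgen_mem k m⟩) = 1 := by
    rw [Submodule.liftQ_apply]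
    show π2 (fgen k m (s, s) - fgen k m (1, 1)) = 1
    have h1 : fgen k m (s, s) = 1 := by simp [fgen, hs, sgn_sr0]
    have h2 : fgen k m (1, 1) = 0 := by simp [fgen, sgn_one]
    rw [h1, h2, sub_zero, map_one]
  have hsurj : Function.Surjective Φ := by
    intro x
    refine ⟨x.val • Submodule.Quotient.mk ⟨fgen k m, fgen_mem k m⟩, ?_⟩
    rw [map_nsmul, hgen, nsmul_eq_mul, mul_one]
    exact ZMod.natCast_rightInverse x
  -- assemble
  let e2 := LinearEquiv.ofBijective Φ ⟨hinj, hsurj⟩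
  have hπs : Function.Surjective (H2π A).hom :=
    (ModuleCat.epi_iff_surjective (H2π A)).mp inferInstance
  have hBk : B = LinearMap.ker (H2π A).hom := by
    ext x
    rw [LinearMap.mem_ker]
    exact (H2π_eq_zero_iff x).symm
  let E1 : (groupCohomology A 2 : Type) ≃+ (cocycles₂ A ⧸ B) :=
    ((Submodule.quotEquivOfEq B _ hBk).trans
      (LinearMap.quotKerEquivOfSurjective _ hπs)).symm.toAddEquiv
  exact ⟨E1.trans e2.toAddEquiv⟩

end
end

section
/- Let k be an even positive integer and m any positive integer. Then the second group cohomology H²(D₂ₖ, ℤ/m) of the dihedral group D₂ₖ of order 2k with coefficients in ℤ/m endowed with the trivial action is isomorphic, as an abelian group, to the direct sum of three copies of ℤ/gcd(m,2). -/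
namespace Stmt5Aux
open DihedralGroup

variable {k m : ℕ}

/-- 2-cocycle condition for trivial action, plain functions. -/
def IsCo (k m : ℕ) (f : DihedralGroup k × DihedralGroup k → ZMod m) : Prop :=
  ∀ g h j : DihedralGroup k, f (g*h, j) + f (g,h) = f (h,j) + f (g, h*j)

section defs
variable (f : DihedralGroup k × DihedralGroup k → ZMod m)

def Sf (n : ℕ) : ZMod m := ∑ t ∈ Finset.range n, f (r 1, r (t : ZMod k))
def Tf : ZMod m := Sf f k
def bf (n : ℕ) : ZMod m := f (sr 0, r (n : ZMod k)) + Sf f n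
def cf : ZMod m := f (r 1, sr 0) - bf f (k-1) + Tf f
def nrm : DihedralGroup k × DihedralGroup k → ZMod m := fun p => f p - f (1,1)
def Iu : ZMod m := f (sr 0, 1) + f (sr 0, sr 0)
def Iv : ZMod m := f (sr 1, 1) + f (sr 1, sr 1)
def Iτ : ZMod m := Tf (nrm f) - (k/2) • cf (nrm f)

lemma Sf_succ (n : ℕ) : Sf f (n+1) = Sf f n + f (r 1, r (n : ZMod k)) :=
  Finset.sum_range_succ _ n

lemma Sf_zero : Sf f 0 = 0 := rfl

lemma bf_def (n : ℕ) : bf f n = f (sr 0, r (n : ZMod k)) + Sf f n := rfl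
lemma Tf_def : Tf f = Sf f k := rfl
lemma cf_def : cf f = f (r 1, sr 0) - bf f (k-1) + Tf f := rfl

end defs

section casts
variable [NeZero k]

lemma r_natCast_zero : (r ((0:ℕ) : ZMod k)) = (1 : DihedralGroup k) := by
  rw [Nat.cast_zero, ← one_def]

lemma r_natCast_k : (r ((k:ℕ) : ZMod k)) = (1 : DihedralGroup k) := by
  rw [ZMod.natCast_self, ← one_def]

lemma castk1 : (((k-1 : ℕ)) : ZMod k) = -1 := by
  have hk : k - 1 + 1 = k := Nat.succ_pred_eq_of_pos (Nat.pos_of_ne_zero (NeZero.ne k))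
  have : (((k-1:ℕ)) : ZMod k) + 1 = 0 := by
    have : (((k-1:ℕ)) : ZMod k) + ((1:ℕ) : ZMod k) = (((k-1)+1 : ℕ) : ZMod k) := by push_cast; ring
    rw [Nat.cast_one] at this
    rw [this, hk, ZMod.natCast_self]
  linear_combination this

lemma val_sub_le {i j : ZMod k} (h : i.val ≤ j.val) : (j - i).val = j.val - i.val := by
  have h1 : ((j.val - i.val : ℕ) : ZMod k) = j - i := by
    push_cast [Nat.cast_sub h]
    rw [ZMod.natCast_zmod_val, ZMod.natCast_zmod_val]
  rw [← h1, ZMod.val_cast_of_lt]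
  have := ZMod.val_lt j
  omega

lemma val_sub_gt {i j : ZMod k} (h : j.val < i.val) : (j - i).val = j.val + k - i.val := by
  have h1 : ((j.val + k - i.val : ℕ) : ZMod k) = j - i := by
    have hik : i.val ≤ j.val + k := by have := ZMod.val_lt i; omega
    push_cast [Nat.cast_sub hik]
    rw [ZMod.natCast_zmod_val, ZMod.natCast_zmod_val, ZMod.natCast_self]
    ring
  rw [← h1, ZMod.val_cast_of_lt]
  have := ZMod.val_lt i
  have := ZMod.val_lt j
  omega

lemma val_add_eq (i j : ZMod k) :
    i.val + j.val = (i+j).val + k * (if k ≤ i.val + j.val then 1 else 0) := by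
  have hadd := ZMod.val_add i j
  have hi := ZMod.val_lt i
  have hj := ZMod.val_lt j
  split_ifs with h
  · rw [Nat.mod_eq_sub_mod h, Nat.mod_eq_of_lt (by omega)] at hadd
    omega
  · rw [Nat.mod_eq_of_lt (by omega)] at hadd
    omega

lemma val_sub_eq (i j : ZMod k) :
    j.val + k * (if j.val < i.val then 1 else 0) = (j - i).val + i.val := by
  have hi := ZMod.val_lt i
  split_ifs with h
  · rw [val_sub_gt h]; omega
  · rw [val_sub_le (by omega)]; omega

end casts

section main
variable [NeZero k] (f : DihedralGroup k × DihedralGroup k → ZMod m)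

lemma norm1 (hco : IsCo k m f) (h11 : f (1,1) = 0) : ∀ g, f (1, g) = 0 := by
  intro g
  have := hco 1 1 g
  simp only [one_mul] at this
  linear_combination h11 - this

lemma norm2 (hco : IsCo k m f) (h11 : f (1,1) = 0) : ∀ g, f (g, 1) = 0 := by
  intro g
  have := hco g 1 1
  simp only [mul_one, one_mul] at this
  linear_combination this + h11

lemma L1 (hco : IsCo k m f) (h1 : ∀ g, f (1, g) = 0) (h2 : ∀ g, f (g, 1) = 0)
    (n p : ℕ) : Sf f n + Sf f p + f (r n, r p) = Sf f (n + p) := by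
  induction n with
  | zero =>
    rw [Sf_zero, r_natCast_zero, h1, Nat.zero_add]
    ring
  | succ n ih =>
    have hh := hco (r 1) (r (n : ZMod k)) (r (p : ZMod k))
    rw [r_mul_r, r_mul_r] at hh
    have e1 : (1 : ZMod k) + (n:ℕ) = ((n+1 : ℕ) : ZMod k) := by push_cast; ring
    have e2 : ((n:ℕ) : ZMod k) + (p:ℕ) = ((n+p : ℕ) : ZMod k) := by push_cast; ring
    rw [e1, e2] at hh
    rw [Sf_succ, show n + 1 + p = (n + p) + 1 by omega, Sf_succ]
    linear_combination ih + hh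

lemma L2 (hco : IsCo k m f) (h1 : ∀ g, f (1, g) = 0) (h2 : ∀ g, f (g, 1) = 0)
    (n : ℕ) : Sf f (n + k) = Sf f n + Tf f := by
  have := L1 f hco h1 h2 n k
  rw [r_natCast_k, h2] at this
  rw [← this, Tf]
  ring

lemma L3 (hco : IsCo k m f) (h1 : ∀ g, f (1, g) = 0) (h2 : ∀ g, f (g, 1) = 0)
    (n p : ℕ) : bf f n + Sf f p + f (sr n, r p) = bf f (n + p) := by
  have hh := hco (sr 0) (r (n : ZMod k)) (r (p : ZMod k))
  rw [sr_mul_r, r_mul_r, zero_add] at hh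
  have e2 : ((n:ℕ) : ZMod k) + (p:ℕ) = ((n+p : ℕ) : ZMod k) := by push_cast; ring
  rw [e2] at hh
  have := L1 f hco h1 h2 n p
  rw [bf_def, bf_def]
  linear_combination hh + this

lemma L5 (hco : IsCo k m f) (h1 : ∀ g, f (1, g) = 0) (h2 : ∀ g, f (g, 1) = 0)
    (n : ℕ) : bf f (n + k) = bf f n + Tf f := by
  rw [bf_def, bf_def, L2 f hco h1 h2 n]
  have : ((n + k : ℕ) : ZMod k) = ((n:ℕ) : ZMod k) := by
    push_cast [ZMod.natCast_self]; ring
  rw [this]; ring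

lemma L7 (hco : IsCo k m f) (h1 : ∀ g, f (1, g) = 0)
    (q : ZMod k) : f (sr 0, sr q) = f (sr 0, sr 0) - f (sr 0, r q) := by
  have hh := hco (sr 0) (sr 0) (r q)
  rw [sr_mul_sr, sr_mul_r, zero_add, sub_zero, ← one_def] at hh
  rw [h1] at hh
  linear_combination - hh

lemma L41 (hco : IsCo k m f) (h1 : ∀ g, f (1, g) = 0) (h2 : ∀ g, f (g, 1) = 0)
    (hk2 : 2 ≤ k) (q : ℕ) (hq : 1 ≤ q) :
    f (r 1, sr q) + bf f q = bf f (q - 1) + cf f := by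
  have ha := hco (r 1) (sr 0) (r (q : ZMod k))
  rw [r_mul_sr, sr_mul_r, zero_add, zero_sub, ← castk1] at ha
  -- ha : f (sr ↑(k-1), r ↑q) + f (r 1, sr 0) = f (sr 0, r ↑q) + f (r 1, sr ↑q)
  have hb := L3 f hco h1 h2 (k-1) q
  rw [show k - 1 + q = (q-1) + k by omega] at hb
  have hc := L5 f hco h1 h2 (q-1)
  have hd : f (sr 0, r (q : ZMod k)) = bf f q - Sf f q := by rw [bf_def]; ring
  rw [cf_def]
  linear_combination -ha + hb + hc - hd

lemma L4 (hco : IsCo k m f) (h1 : ∀ g, f (1, g) = 0) (h2 : ∀ g, f (g, 1) = 0)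
    (hk2 : 2 ≤ k) (n p : ℕ) (hnp : n ≤ p) :
    f (r n, sr p) + Sf f n + bf f p = bf f (p - n) + n • cf f := by
  induction n with
  | zero =>
    rw [r_natCast_zero, h1, Sf_zero, Nat.sub_zero, zero_smul]
    ring
  | succ n ih =>
    have hh := hco (r 1) (r (n : ZMod k)) (sr (p : ZMod k))
    rw [r_mul_r, r_mul_sr] at hh
    have e1 : (1 : ZMod k) + (n:ℕ) = ((n+1 : ℕ) : ZMod k) := by push_cast; ring
    have e2 : ((p:ℕ) : ZMod k) - (n:ℕ) = ((p - n : ℕ) : ZMod k) := by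
      rw [Nat.cast_sub (by omega)]
    rw [e1, e2] at hh
    have h41 := L41 f hco h1 h2 hk2 (p - n) (by omega)
    have ihn := ih (by omega)
    have hsf := Sf_succ f n
    rw [show p - n - 1 = p - (n+1) by omega] at h41
    rw [succ_nsmul]
    linear_combination hh + ihn + h41 + hsf

lemma hTT (hco : IsCo k m f) (h1 : ∀ g, f (1, g) = 0) (h2 : ∀ g, f (g, 1) = 0)
    (hk2 : 2 ≤ k) : Tf f + Tf f = k • cf f := by
  have := L4 f hco h1 h2 hk2 k k le_rfl
  rw [r_natCast_k, h1, Nat.sub_self] at this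
  have hb0 : bf f 0 = 0 := by
    rw [bf_def, r_natCast_zero, h2, Sf_zero]; ring
  have hbk : bf f k = bf f 0 + Tf f := by
    have := L5 f hco h1 h2 0
    rwa [Nat.zero_add] at this
  rw [hb0, hbk, hb0] at this
  rw [← Tf_def f] at this
  linear_combination this


lemma N1 (hco : IsCo k m f) (h1 : ∀ g, f (1, g) = 0) (h2 : ∀ g, f (g, 1) = 0)
    (i j : ZMod k) : f (r i, r j) + Sf f i.val + Sf f j.val
      = Sf f (i+j).val + (if k ≤ i.val + j.val then Tf f else 0) := by
  have hL := L1 f hco h1 h2 i.val j.val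
  rw [ZMod.natCast_zmod_val, ZMod.natCast_zmod_val] at hL
  have hval := val_add_eq i j
  split_ifs at hval ⊢ with hcs
  · rw [mul_one] at hval
    rw [hval, L2 f hco h1 h2] at hL
    linear_combination hL
  · rw [mul_zero, add_zero] at hval
    rw [hval] at hL
    linear_combination hL

lemma N3 (hco : IsCo k m f) (h1 : ∀ g, f (1, g) = 0) (h2 : ∀ g, f (g, 1) = 0)
    (i j : ZMod k) : f (sr i, r j) + bf f i.val + Sf f j.val
      = bf f (i+j).val + (if k ≤ i.val + j.val then Tf f else 0) := by
  have hL := L3 f hco h1 h2 i.val j.val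
  rw [ZMod.natCast_zmod_val, ZMod.natCast_zmod_val] at hL
  have hval := val_add_eq i j
  split_ifs at hval ⊢ with hcs
  · rw [mul_one] at hval
    rw [hval, L5 f hco h1 h2] at hL
    linear_combination hL
  · rw [mul_zero, add_zero] at hval
    rw [hval] at hL
    linear_combination hL

lemma N2 (hco : IsCo k m f) (h1 : ∀ g, f (1, g) = 0) (h2 : ∀ g, f (g, 1) = 0)
    (hk2 : 2 ≤ k) (i j : ZMod k) :
    f (r i, sr j) + Sf f i.val + bf f j.val + (if j.val < i.val then Tf f else 0)
      = bf f (j - i).val + i.val • cf f := by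
  have hL := L4 f hco h1 h2 hk2 i.val (j.val + k) (by have := ZMod.val_lt i; omega)
  have ej : ((j.val + k : ℕ) : ZMod k) = j := by
    push_cast [ZMod.natCast_self, ZMod.natCast_zmod_val]; ring
  rw [ZMod.natCast_zmod_val, ej] at hL
  have hbjk := L5 f hco h1 h2 j.val
  split_ifs with hcs
  · rw [show j.val + k - i.val = (j - i).val by rw [val_sub_gt hcs]] at hL
    linear_combination hL - hbjk
  · have hle : i.val ≤ j.val := by omega
    rw [show j.val + k - i.val = (j - i).val + k by rw [val_sub_le hle]; omega] at hL
    have hb2 := L5 f hco h1 h2 (j - i).val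
    linear_combination hL - hbjk + hb2


theorem key (hk2 : 2 ≤ k) (hke : 2 * (k/2) = k)
    (hco : IsCo k m f)
    (hu : ∃ μ, Iu f = μ + μ) (hv : ∃ ν, Iv f = ν + ν) (hτ : Iτ f = 0) :
    ∃ x : DihedralGroup k → ZMod m, ∀ g h, x h - x (g*h) + x g = f (g,h) := by
  classical
  set C := f (1,1) with hC
  have hco1 : IsCo k m (nrm f) := by
    intro g h j
    simp only [nrm]
    linear_combination hco g h j
  have h11 : nrm f (1,1) = 0 := sub_self _
  have h1 := norm1 (nrm f) hco1 h11
  have h2 := norm2 (nrm f) hco1 h11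
  have hfs : ∀ p, f p = nrm f p + C := fun p => by simp only [nrm]; ring
  -- u
  obtain ⟨μ, hμ⟩ := hu
  have hu1 : nrm f (sr 0, sr 0) = (μ - C) + (μ - C) := by
    have : nrm f (sr 0, 1) = 0 := h2 (sr 0)
    simp only [nrm] at this ⊢
    have hIu : f (sr 0, 1) + f (sr 0, sr 0) = μ + μ := hμ
    linear_combination hIu - this
  obtain ⟨ν, hν⟩ := hv
  have hv1 : nrm f (sr 1, sr 1) = (ν - C) + (ν - C) := by
    have : nrm f (sr 1, 1) = 0 := h2 (sr 1)
    simp only [nrm] at this ⊢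
    have hIv : f (sr 1, 1) + f (sr 1, sr 1) = ν + ν := hν
    linear_combination hIv - this
  -- the relation giving c ∈ 2A
  have hb0 : bf (nrm f) 0 = 0 := by
    rw [bf_def, r_natCast_zero, h2, Sf_zero]; ring
  have hS1 : Sf (nrm f) 1 = 0 := by
    rw [Sf_succ, Sf_zero, r_natCast_zero, h2]; ring
  set lam := (ν - C) - (μ - C) + bf (nrm f) 1 with hlam
  have hcl : cf (nrm f) = lam + lam := by
    have ha := hco1 (sr 0) (r 1) (sr 1)
    rw [sr_mul_r, r_mul_sr, zero_add, sub_self] at ha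
    -- ha : nrm f (sr 1, sr 1) + nrm f (sr 0, r 1) = nrm f (r 1, sr 1) + nrm f (sr 0, sr 0)
    have hb := L41 (nrm f) hco1 h1 h2 hk2 1 le_rfl
    rw [Nat.cast_one] at hb
    -- hb : nrm f (r 1, sr 1) + bf (nrm f) 1 = bf (nrm f) 0 + cf (nrm f)
    have hd : nrm f (sr 0, r 1) = bf (nrm f) 1 - Sf (nrm f) 1 := by
      rw [bf_def, Nat.cast_one]; ring
    rw [hb0] at hb
    rw [hS1] at hd
    linear_combination hv1 - hu1 - ha - hb + hd
  have hT : Tf (nrm f) = k • lam := by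
    have hτ' : Tf (nrm f) - (k/2) • cf (nrm f) = 0 := hτ
    rw [hcl] at hτ'
    have : (k/2) • (lam + lam) = k • lam := by
      rw [smul_add, ← add_nsmul, show k/2 + k/2 = k by omega]
    rw [this] at hτ'
    linear_combination hτ'
  have hTm : Tf (nrm f) = (k : ZMod m) * lam := by rw [hT, nsmul_eq_mul]
  have hcm : cf (nrm f) = 2 * lam := by rw [hcl]; ring
  set mu1 := μ - C with hmu1
  refine ⟨fun g => (match g with
    | DihedralGroup.r i => lam * (i.val : ZMod m) - Sf (nrm f) i.val + C
    | DihedralGroup.sr i => mu1 + lam * (i.val : ZMod m) - bf (nrm f) i.val + C), ?_⟩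
  intro g h
  have hnsmul : ∀ (n : ℕ) (a : ZMod m), n • a = (n : ZMod m) * a := fun n a => nsmul_eq_mul n a
  rcases g with i | i <;> rcases h with j | j <;>
    [rw [r_mul_r]; rw [r_mul_sr]; rw [sr_mul_r]; rw [sr_mul_sr]] <;> dsimp only
  · -- (r i, r j)
    have hN := N1 (nrm f) hco1 h1 h2 i j
    have hval := val_add_eq i j
    rw [hfs (r i, r j)]
    split_ifs at hN hval with hcs
    · rw [mul_one] at hval
      have ec : ((i.val : ZMod m)) + (j.val : ZMod m) = ((i+j).val : ZMod m) + (k : ZMod m) := by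
        exact_mod_cast congrArg (Nat.cast : ℕ → ZMod m) hval
      linear_combination lam * ec - hN - hTm
    · rw [mul_zero, add_zero] at hval
      have ec : ((i.val : ZMod m)) + (j.val : ZMod m) = ((i+j).val : ZMod m) := by
        exact_mod_cast congrArg (Nat.cast : ℕ → ZMod m) hval
      linear_combination lam * ec - hN
  · -- (r i, sr j)
    have hN := N2 (nrm f) hco1 h1 h2 hk2 i j
    have hval := val_sub_eq i j
    rw [hfs (r i, sr j)]
    rw [hnsmul] at hN
    split_ifs at hN hval with hcs
    · rw [mul_one] at hval
      have ec : ((j.val : ZMod m)) + (k : ZMod m) = (((j-i).val : ZMod m)) + (i.val : ZMod m) := by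
        exact_mod_cast congrArg (Nat.cast : ℕ → ZMod m) hval
      linear_combination lam * ec - hN - (i.val : ZMod m) * hcm + hTm
    · rw [mul_zero, add_zero] at hval
      have ec : ((j.val : ZMod m)) = (((j-i).val : ZMod m)) + (i.val : ZMod m) := by
        exact_mod_cast congrArg (Nat.cast : ℕ → ZMod m) hval
      linear_combination lam * ec - hN - (i.val : ZMod m) * hcm
  · -- (sr i, r j)
    have hN := N3 (nrm f) hco1 h1 h2 i j
    have hval := val_add_eq i j
    rw [hfs (sr i, r j)]
    split_ifs at hN hval with hcs
    · rw [mul_one] at hval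
      have ec : ((i.val : ZMod m)) + (j.val : ZMod m) = ((i+j).val : ZMod m) + (k : ZMod m) := by
        exact_mod_cast congrArg (Nat.cast : ℕ → ZMod m) hval
      linear_combination lam * ec - hN - hTm
    · rw [mul_zero, add_zero] at hval
      have ec : ((i.val : ZMod m)) + (j.val : ZMod m) = ((i+j).val : ZMod m) := by
        exact_mod_cast congrArg (Nat.cast : ℕ → ZMod m) hval
      linear_combination lam * ec - hN
  · -- (sr i, sr j)
    have hd := hco1 (sr 0) (r i) (sr j)
    rw [sr_mul_r, r_mul_sr, zero_add] at hd
    -- hd : nrm f (sr i, sr j) + nrm f (sr 0, r i) = nrm f (r i, sr j) + nrm f (sr 0, sr (j - i))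
    have hL7 := L7 (nrm f) hco1 h1 (j - i)
    have hbq : ∀ q : ZMod k, nrm f (sr 0, r q) = bf (nrm f) q.val - Sf (nrm f) q.val := by
      intro q
      conv_lhs => rw [← ZMod.natCast_zmod_val q]
      rw [bf_def]; ring
    have hN := N2 (nrm f) hco1 h1 h2 hk2 i j
    have hval := val_sub_eq i j
    rw [hfs (sr i, sr j)]
    rw [hnsmul] at hN
    rw [hbq i] at hd
    rw [hbq (j - i)] at hL7
    split_ifs at hN hval with hcs
    · rw [mul_one] at hval
      have ec : ((j.val : ZMod m)) + (k : ZMod m) = (((j-i).val : ZMod m)) + (i.val : ZMod m) := by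
        exact_mod_cast congrArg (Nat.cast : ℕ → ZMod m) hval
      linear_combination lam * ec - hN - (i.val : ZMod m) * hcm + hTm - hd - hL7 - hu1
    · rw [mul_zero, add_zero] at hval
      have ec : ((j.val : ZMod m)) = (((j-i).val : ZMod m)) + (i.val : ZMod m) := by
        exact_mod_cast congrArg (Nat.cast : ℕ → ZMod m) hval
      linear_combination lam * ec - hN - (i.val : ZMod m) * hcm - hd - hL7 - hu1

end main

section gens
variable [NeZero k] [NeZero m]

/-- character detecting reflections -/
def es : DihedralGroup k → ZMod m
  | DihedralGroup.r _ => 0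
  | DihedralGroup.sr _ => 1

def Gen1 (a : ZMod m) : DihedralGroup k × DihedralGroup k → ZMod m :=
  fun p => a * es p.1 * es p.2

def pz : DihedralGroup k → ℕ
  | DihedralGroup.r i => i.val
  | DihedralGroup.sr i => i.val

def Gen2 (a : ZMod m) : DihedralGroup k × DihedralGroup k → ZMod m :=
  fun p => a * (((pz p.1 % 2) * (pz p.2 % 2) : ℕ) : ZMod m)

def nn : DihedralGroup k → DihedralGroup k → ℕ
  | DihedralGroup.r i, DihedralGroup.r j => if k ≤ i.val + j.val then 1 else 0
  | DihedralGroup.r i, DihedralGroup.sr j => if j.val < i.val then 1 else 0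
  | DihedralGroup.sr i, DihedralGroup.r j => if k ≤ i.val + j.val then 1 else 0
  | DihedralGroup.sr i, DihedralGroup.sr j => if j.val < i.val then 1 else 0

def Gen3 (w : ZMod m) : DihedralGroup k × DihedralGroup k → ZMod m :=
  fun p => w * ((nn p.1 p.2 : ℕ) : ZMod m)

lemma gen1_co (a : ZMod m) : IsCo k m (Gen1 a) := by
  intro g h j
  rcases g with i1 | i1 <;> rcases h with i2 | i2 <;> rcases j with i3 | i3 <;>
    simp only [Gen1, es, r_mul_r, r_mul_sr, sr_mul_r, sr_mul_sr] <;> ring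

lemma hpar (hke : 2 * (k/2) = k) (g h : DihedralGroup k) :
    pz (g * h) % 2 = (pz g + pz h) % 2 := by
  rcases g with i | i <;> rcases h with j | j <;>
    simp only [pz, r_mul_r, r_mul_sr, sr_mul_r, sr_mul_sr]
  · have := val_add_eq i j; split_ifs at this <;> omega
  · have := val_sub_eq i j; split_ifs at this <;> omega
  · have := val_add_eq i j; split_ifs at this <;> omega
  · have := val_sub_eq i j; split_ifs at this <;> omega

lemma gen2_co (hke : 2 * (k/2) = k) (a : ZMod m) : IsCo k m (Gen2 a) := by
  intro g h j
  simp only [Gen2]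
  rw [hpar hke g h, hpar hke h j]
  have hx := Nat.mod_two_eq_zero_or_one (pz g)
  have hy := Nat.mod_two_eq_zero_or_one (pz h)
  have hz := Nat.mod_two_eq_zero_or_one (pz j)
  rw [Nat.add_mod (pz g) (pz h), Nat.add_mod (pz h) (pz j)]
  rcases hx with hx | hx <;> rcases hy with hy | hy <;> rcases hz with hz | hz <;>
    rw [hx, hy, hz] <;> norm_num

lemma wmod (w : ZMod m) (hw : w + w = 0) (n : ℕ) :
    w * (n : ZMod m) = w * ((n % 2 : ℕ) : ZMod m) := by
  have hn : ((n : ℕ) : ZMod m) = 2 * ((n/2 : ℕ) : ZMod m) + ((n % 2 : ℕ) : ZMod m) := by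
    conv_lhs => rw [← Nat.div_add_mod n 2]
    push_cast; ring
  linear_combination ((n/2 : ℕ) : ZMod m) * hw + w * hn

lemma wpar (w : ZMod m) (hw : w + w = 0) (e1 e2 e3 e4 : ℕ)
    (h : (e1 + e2) % 2 = (e3 + e4) % 2) :
    w * (e1 : ZMod m) + w * (e2 : ZMod m) = w * (e3 : ZMod m) + w * (e4 : ZMod m) := by
  have l : w * (e1 : ZMod m) + w * (e2 : ZMod m) = w * (((e1 + e2) : ℕ) : ZMod m) := by
    push_cast; ring
  have r : w * (e3 : ZMod m) + w * (e4 : ZMod m) = w * (((e3 + e4) : ℕ) : ZMod m) := by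
    push_cast; ring
  rw [l, r, wmod w hw (e1+e2), wmod w hw (e3+e4), h]


lemma gen3_co (hk2 : 2 ≤ k) (w : ZMod m) (hw : w + w = 0) : IsCo k m (Gen3 w) := by
  have hk0 : 0 < k := by omega
  intro g h j
  rcases g with i | i <;> rcases h with j2 | j2 <;> rcases j with l | l <;>
    simp only [Gen3, nn, r_mul_r, r_mul_sr, sr_mul_r, sr_mul_sr] <;>
    refine wpar _ hw _ _ _ _ ?_
  · have h1 := val_add_eq i j2
    have h2 := val_add_eq (i+j2) l
    have h3 := val_add_eq j2 l
    have h4 := val_add_eq i (j2+l)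
    rw [add_assoc] at h2
    split_ifs at h1 h2 h3 h4 ⊢ <;> omega
  · have h1 := val_add_eq i j2
    have h2 := val_sub_eq (i+j2) l
    have h3 := val_sub_eq j2 l
    have h4 := val_sub_eq i (l-j2)
    rw [show l - (i + j2) = l - j2 - i by ring] at h2
    split_ifs at h1 h2 h3 h4 ⊢ <;> omega
  · have h1 := val_sub_eq i j2
    have h2 := val_add_eq (j2-i) l
    have h3 := val_add_eq j2 l
    have h4 := val_sub_eq i (j2+l)
    rw [show j2 - i + l = j2 + l - i by ring] at h2
    split_ifs at h1 h2 h3 h4 ⊢ <;> omega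
  · have h1 := val_sub_eq i j2
    have h2 := val_sub_eq (j2-i) l
    have h3 := val_sub_eq j2 l
    have h4 := val_add_eq i (l-j2)
    rw [show l - (j2 - i) = i + (l - j2) by ring] at h2
    split_ifs at h1 h2 h3 h4 ⊢ <;> omega
  · have h1 := val_add_eq i j2
    have h2 := val_add_eq (i+j2) l
    have h3 := val_add_eq j2 l
    have h4 := val_add_eq i (j2+l)
    rw [add_assoc] at h2
    split_ifs at h1 h2 h3 h4 ⊢ <;> omega
  · have h1 := val_add_eq i j2
    have h2 := val_sub_eq (i+j2) l
    have h3 := val_sub_eq j2 l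
    have h4 := val_sub_eq i (l-j2)
    rw [show l - (i + j2) = l - j2 - i by ring] at h2
    split_ifs at h1 h2 h3 h4 ⊢ <;> omega
  · have h1 := val_sub_eq i j2
    have h2 := val_add_eq (j2-i) l
    have h3 := val_add_eq j2 l
    have h4 := val_sub_eq i (j2+l)
    rw [show j2 - i + l = j2 + l - i by ring] at h2
    split_ifs at h1 h2 h3 h4 ⊢ <;> omega
  · have h1 := val_sub_eq i j2
    have h2 := val_sub_eq (j2-i) l
    have h3 := val_sub_eq j2 l
    have h4 := val_add_eq i (l-j2)
    rw [show l - (j2 - i) = i + (l - j2) by ring] at h2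
    split_ifs at h1 h2 h3 h4 ⊢ <;> omega

lemma nrm_of_zero (f : DihedralGroup k × DihedralGroup k → ZMod m) (h : f (1,1) = 0) :
    nrm f = f := by
  funext p; simp only [nrm]; rw [h, sub_zero]

-- invariants of Gen1
lemma Iu_gen1 (a : ZMod m) : Iu (Gen1 (k := k) a) = a := by
  simp only [Iu, one_def]
  simp [Gen1, es]

lemma Iv_gen1 (a : ZMod m) : Iv (Gen1 (k := k) a) = a := by
  simp only [Iv, one_def]
  simp [Gen1, es]

lemma Sf_gen1 (a : ZMod m) (n : ℕ) : Sf (Gen1 (k := k) a) n = 0 :=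
  Finset.sum_eq_zero fun t _ => by simp [Gen1, es]

lemma Itau_gen1 (a : ZMod m) : Iτ (Gen1 (k := k) a) = 0 := by
  have h0 : Gen1 (k := k) a (1,1) = 0 := by simp [Gen1, one_def, es, -r_zero]
  rw [Iτ, nrm_of_zero _ h0]
  have hc : cf (Gen1 (k := k) a) = 0 := by
    rw [cf_def, bf_def, Sf_gen1, Tf_def, Sf_gen1]
    simp [Gen1, es]
  rw [hc, Tf_def, Sf_gen1, smul_zero, sub_zero]

-- invariants of Gen2
lemma Iu_gen2 (a : ZMod m) : Iu (Gen2 (k := k) a) = 0 := by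
  simp only [Iu, one_def]
  simp [Gen2, pz]

lemma Iv_gen2 (hk2 : 2 ≤ k) (a : ZMod m) : Iv (Gen2 (k := k) a) = a := by
  haveI : Fact (1 < k) := ⟨by omega⟩
  simp only [Iv, one_def]
  simp [Gen2, pz, ZMod.val_one]

lemma sum_mod_two (n : ℕ) : ∑ t ∈ Finset.range n, t % 2 = n / 2 := by
  induction n with
  | zero => rfl
  | succ n ih => rw [Finset.sum_range_succ, ih]; omega

lemma Sf_gen2 (hk2 : 2 ≤ k) (a : ZMod m) (n : ℕ) (hn : n ≤ k) :
    Sf (Gen2 (k := k) a) n = a * ((n/2 : ℕ) : ZMod m) := by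
  haveI : Fact (1 < k) := ⟨by omega⟩
  have : ∀ t ∈ Finset.range n, Gen2 (k := k) a (r 1, r (t : ZMod k)) = a * ((t % 2 : ℕ) : ZMod m) := by
    intro t ht
    have htk : t < k := lt_of_lt_of_le (Finset.mem_range.1 ht) hn
    simp only [Gen2, pz]
    rw [ZMod.val_one, ZMod.val_cast_of_lt htk]
    norm_num
  rw [Sf, Finset.sum_congr rfl this, ← Finset.mul_sum, ← Nat.cast_sum, sum_mod_two]

lemma Itau_gen2 (hk2 : 2 ≤ k) (hke : 2 * (k/2) = k) (a : ZMod m) : Iτ (Gen2 (k := k) a) = 0 := by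
  haveI : Fact (1 < k) := ⟨by omega⟩
  have h0 : Gen2 (k := k) a (1,1) = 0 := by simp [Gen2, pz, one_def, -r_zero]
  rw [Iτ, nrm_of_zero _ h0]
  have hT : Tf (Gen2 (k := k) a) = a * ((k/2 : ℕ) : ZMod m) := by
    rw [Tf_def, Sf_gen2 hk2 a k le_rfl]
  have hc : cf (Gen2 (k := k) a) = a := by
    rw [cf_def, bf_def, Sf_gen2 hk2 a (k-1) (by omega), Tf_def, Sf_gen2 hk2 a k le_rfl]
    have e1 : Gen2 (k := k) a (r 1, sr 0) = 0 := by
      simp [Gen2, pz, ZMod.val_one]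
    have e2 : Gen2 (k := k) a (sr 0, r ((k-1 : ℕ) : ZMod k)) = 0 := by
      simp [Gen2, pz]
    rw [e1, e2]
    have hcast : ((k/2 : ℕ) : ZMod m) = (((k-1)/2 : ℕ) : ZMod m) + 1 := by
      have hq : (k-1)/2 + 1 = k/2 := by omega
      rw [← hq]; push_cast; ring
    linear_combination a * hcast
  rw [hT, hc, nsmul_eq_mul]
  ring

-- invariants of Gen3
lemma Iu_gen3 (hk2 : 2 ≤ k) (w : ZMod m) : Iu (Gen3 (k := k) w) = 0 := by
  simp only [Iu, one_def, Gen3, nn, ZMod.val_zero]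
  rw [if_neg (by omega), if_neg (by omega)]
  simp

lemma Iv_gen3 (hk2 : 2 ≤ k) (w : ZMod m) : Iv (Gen3 (k := k) w) = 0 := by
  haveI : Fact (1 < k) := ⟨by omega⟩
  simp only [Iv, Gen3, one_def, nn, ZMod.val_zero, ZMod.val_one]
  rw [if_neg (by omega), if_neg (by omega)]
  simp

lemma Sf_gen3_lt (hk2 : 2 ≤ k) (w : ZMod m) (n : ℕ) (hn : n ≤ k - 1) :
    Sf (Gen3 (k := k) w) n = 0 := by
  haveI : Fact (1 < k) := ⟨by omega⟩
  refine Finset.sum_eq_zero fun t ht => ?_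
  have ht' : t < k - 1 := lt_of_lt_of_le (Finset.mem_range.1 ht) hn
  simp only [Gen3, nn]
  rw [ZMod.val_one, ZMod.val_cast_of_lt (by omega), if_neg (by omega)]
  simp

lemma Tf_gen3 (hk2 : 2 ≤ k) (w : ZMod m) : Tf (Gen3 (k := k) w) = w := by
  haveI : Fact (1 < k) := ⟨by omega⟩
  have h := Sf_succ (Gen3 (k := k) w) (k-1)
  rw [show k - 1 + 1 = k by omega] at h
  rw [Tf_def, h, Sf_gen3_lt hk2 w (k-1) le_rfl]
  simp only [Gen3, nn]
  rw [ZMod.val_one, ZMod.val_cast_of_lt (by omega), if_pos (by omega)]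
  simp

lemma Itau_gen3 (hk2 : 2 ≤ k) (w : ZMod m) (hw : w + w = 0) : Iτ (Gen3 (k := k) w) = w := by
  haveI : Fact (1 < k) := ⟨by omega⟩
  have h0 : Gen3 (k := k) w (1,1) = 0 := by
    simp only [Gen3, one_def, nn, ZMod.val_zero]
    rw [if_neg (by omega)]
    simp
  rw [Iτ, nrm_of_zero _ h0]
  have hc : cf (Gen3 (k := k) w) = 0 := by
    rw [cf_def, bf_def, Sf_gen3_lt hk2 w (k-1) le_rfl, Tf_gen3 hk2 w]
    have e1 : Gen3 (k := k) w (r 1, sr 0) = w := by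
      simp only [Gen3, nn]
      rw [ZMod.val_one, ZMod.val_zero, if_pos (by omega)]
      simp
    have e2 : Gen3 (k := k) w (sr 0, r ((k-1 : ℕ) : ZMod k)) = 0 := by
      simp only [Gen3, nn]
      rw [ZMod.val_zero, ZMod.val_cast_of_lt (by omega), if_neg (by omega)]
      simp
    rw [e1, e2]
    linear_combination hw
  rw [hc, Tf_gen3 hk2 w, smul_zero, sub_zero]

-- additivity
lemma IsCo_add {f g : DihedralGroup k × DihedralGroup k → ZMod m}
    (hf : IsCo k m f) (hg : IsCo k m g) : IsCo k m (fun p => f p + g p) := by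
  intro a b c
  have h1 := hf a b c
  have h2 := hg a b c
  dsimp only
  linear_combination h1 + h2

lemma Iu_add (f g : DihedralGroup k × DihedralGroup k → ZMod m) :
    Iu (fun p => f p + g p) = Iu f + Iu g := by simp only [Iu]; ring

lemma Iv_add (f g : DihedralGroup k × DihedralGroup k → ZMod m) :
    Iv (fun p => f p + g p) = Iv f + Iv g := by simp only [Iv]; ring

lemma Sf_add (f g : DihedralGroup k × DihedralGroup k → ZMod m) (n : ℕ) :
    Sf (fun p => f p + g p) n = Sf f n + Sf g n := by
  simp only [Sf, Finset.sum_add_distrib]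

lemma bf_add (f g : DihedralGroup k × DihedralGroup k → ZMod m) (n : ℕ) :
    bf (fun p => f p + g p) n = bf f n + bf g n := by
  simp only [bf_def, Sf_add]; ring

lemma cf_add (f g : DihedralGroup k × DihedralGroup k → ZMod m) :
    cf (fun p => f p + g p) = cf f + cf g := by
  simp only [cf_def, bf_add, Tf_def, Sf_add]; ring

lemma nrm_add (f g : DihedralGroup k × DihedralGroup k → ZMod m) :
    nrm (fun p => f p + g p) = fun p => nrm f p + nrm g p := by
  funext p; simp only [nrm]; ring

lemma Itau_add (f g : DihedralGroup k × DihedralGroup k → ZMod m) :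
    Iτ (fun p => f p + g p) = Iτ f + Iτ g := by
  simp only [Iτ, nrm_add, Tf_def, Sf_add, cf_add, smul_add]
  ring

end gens

section cobound
variable [NeZero k] [NeZero m]

def dfun (x : DihedralGroup k → ZMod m) : DihedralGroup k × DihedralGroup k → ZMod m :=
  fun p => x p.2 - x (p.1 * p.2) + x p.1

lemma Iu_dfun (x : DihedralGroup k → ZMod m) : Iu (dfun x) = x (sr 0) + x (sr 0) := by
  simp only [Iu, dfun]
  rw [mul_one, sr_mul_sr, sub_self, ← one_def]
  ring

lemma Iv_dfun (x : DihedralGroup k → ZMod m) : Iv (dfun x) = x (sr 1) + x (sr 1) := by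
  simp only [Iv, dfun]
  rw [mul_one, sr_mul_sr, sub_self, ← one_def]
  ring

lemma nrm_dfun (x : DihedralGroup k → ZMod m) :
    nrm (dfun x) = dfun (fun g => x g - x 1) := by
  funext p
  simp only [nrm, dfun, one_mul]
  ring

lemma Sf_dfun (y : DihedralGroup k → ZMod m) (hy : y 1 = 0) (n : ℕ) :
    Sf (dfun y) n = n • y (r 1) - y (r (n : ZMod k)) := by
  induction n with
  | zero => rw [Sf_zero, r_natCast_zero, hy, zero_smul]; ring
  | succ n ih =>
    rw [Sf_succ, ih, succ_nsmul]
    simp only [dfun]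
    rw [r_mul_r]
    have e1 : (1 : ZMod k) + (n:ℕ) = ((n+1 : ℕ) : ZMod k) := by push_cast; ring
    rw [e1]
    ring

lemma bf_dfun (y : DihedralGroup k → ZMod m) (hy : y 1 = 0) (n : ℕ) :
    bf (dfun y) n = y (sr 0) - y (sr (n : ZMod k)) + n • y (r 1) := by
  rw [bf_def, Sf_dfun y hy]
  simp only [dfun]
  rw [sr_mul_r, zero_add]
  ring

lemma cf_dfun (hk2 : 2 ≤ k) (y : DihedralGroup k → ZMod m) (hy : y 1 = 0) :
    cf (dfun y) = y (r 1) + y (r 1) := by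
  rw [cf_def, bf_dfun y hy, Tf_def, Sf_dfun y hy, r_natCast_k, hy]
  simp only [dfun]
  rw [r_mul_sr, zero_sub, ← castk1]
  have hs : (k-1) • y (r 1) + y (r 1) = k • y (r 1) := by
    rw [← succ_nsmul, show k - 1 + 1 = k by omega]
  rw [← hs]
  ring

lemma Itau_dfun (hk2 : 2 ≤ k) (hke : 2 * (k/2) = k) (x : DihedralGroup k → ZMod m) :
    Iτ (dfun x) = 0 := by
  rw [Iτ, nrm_dfun]
  have hy : (fun g => x g - x 1) 1 = 0 := sub_self _
  rw [Tf_def, Sf_dfun _ hy, cf_dfun hk2 _ hy, r_natCast_k]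
  have hs : (k/2) • ((x (r 1) - x 1) + (x (r 1) - x 1)) = k • (x (r 1) - x 1) := by
    rw [smul_add, ← add_nsmul, show k/2 + k/2 = k by omega]
  linear_combination -hs

lemma nrm_isCo (f : DihedralGroup k × DihedralGroup k → ZMod m) (hco : IsCo k m f) :
    IsCo k m (nrm f) := by
  intro g h j
  simp only [nrm]
  linear_combination hco g h j

lemma Itau_tor (hk2 : 2 ≤ k) (hke : 2 * (k/2) = k)
    (f : DihedralGroup k × DihedralGroup k → ZMod m) (hco : IsCo k m f) :
    Iτ f + Iτ f = 0 := by
  have hco1 := nrm_isCo f hco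
  have h11' : nrm f (1,1) = 0 := sub_self _
  have h1 := norm1 (nrm f) hco1 h11'
  have h2 := norm2 (nrm f) hco1 h11'
  have hT := hTT (nrm f) hco1 h1 h2 hk2
  have hs : (k/2) • cf (nrm f) + (k/2) • cf (nrm f) = k • cf (nrm f) := by
    rw [← add_nsmul, show k/2 + k/2 = k by omega]
  rw [Iτ]
  linear_combination hT - hs

end cobound

section torsd
variable [NeZero m]

instance gcdNeZero : NeZero (Nat.gcd m 2) :=
  ⟨fun h => (NeZero.ne m) (Nat.eq_zero_of_gcd_eq_zero_left h)⟩

def castd : ZMod m →+* ZMod (Nat.gcd m 2) :=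
  ZMod.castHom (Nat.gcd_dvd_left m 2) _

def tors (a : ZMod m) : ZMod (Nat.gcd m 2) :=
  ((a.val / (m / 2) : ℕ) : ZMod (Nat.gcd m 2))

lemma two_d (c : ZMod (Nat.gcd m 2)) : c + c = 0 := by
  have h2 : ((2:ℕ) : ZMod (Nat.gcd m 2)) = 0 :=
    (ZMod.natCast_eq_zero_iff _ _).2 (Nat.gcd_dvd_right m 2)
  have : c + c = ((2:ℕ) : ZMod (Nat.gcd m 2)) * c := by push_cast; ring
  rw [this, h2, zero_mul]

lemma two_tor (a : ZMod m) (h : a + a = 0) :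
    a = 0 ∨ (2 ∣ m ∧ a = ((m/2 : ℕ) : ZMod m)) := by
  have hv : (a + a).val = (a.val + a.val) % m := ZMod.val_add a a
  rw [h, ZMod.val_zero] at hv
  have hdvd : m ∣ (a.val + a.val) := Nat.dvd_of_mod_eq_zero hv.symm
  have hlt := ZMod.val_lt a
  have hm : 0 < m := Nat.pos_of_ne_zero (NeZero.ne m)
  rcases Nat.eq_zero_or_pos a.val with h0 | hpos
  · left
    rw [← ZMod.natCast_zmod_val a, h0, Nat.cast_zero]
  · right
    have h2 : a.val + a.val = m := by
      have hge := Nat.le_of_dvd (by omega) hdvd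
      have hdvd2 : m ∣ (a.val + a.val - m) := Nat.dvd_sub hdvd dvd_rfl
      have := Nat.eq_zero_of_dvd_of_lt hdvd2 (by omega)
      omega
    constructor
    · omega
    · rw [← ZMod.natCast_zmod_val a, show m/2 = a.val by omega]

lemma tors_zero : tors (0 : ZMod m) = 0 := by
  rw [tors, ZMod.val_zero, Nat.zero_div, Nat.cast_zero]

lemma hd2 (h2 : 2 ∣ m) : Nat.gcd m 2 = 2 := Nat.gcd_eq_right h2

lemma hd1 (h2 : ¬ (2 ∣ m)) : Nat.gcd m 2 = 1 := by
  rcases (Nat.dvd_prime Nat.prime_two).mp (Nat.gcd_dvd_right m 2) with h | h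
  · exact h
  · exact absurd (h ▸ Nat.gcd_dvd_left m 2) h2

lemma tors_half (h2 : 2 ∣ m) : tors (((m/2 : ℕ) : ZMod m)) = 1 := by
  have hm : 2 ≤ m := Nat.le_of_dvd (Nat.pos_of_ne_zero (NeZero.ne m)) h2
  rw [tors, ZMod.val_cast_of_lt (by omega), Nat.div_self (by omega), Nat.cast_one]

lemma tors_add (a b : ZMod m) (ha : a + a = 0) (hb : b + b = 0) :
    tors (a + b) = tors a + tors b := by
  rcases two_tor a ha with rfl | ⟨h2, rfl⟩ <;> rcases two_tor b hb with rfl | ⟨h2', rfl⟩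
  · rw [add_zero, tors_zero, add_zero]
  · rw [zero_add, tors_zero, zero_add]
  · rw [add_zero, tors_zero, add_zero]
  · have hsum : ((m/2 : ℕ) : ZMod m) + ((m/2 : ℕ) : ZMod m) = 0 := by
      have hh : m/2 + m/2 = m := by omega
      rw [← Nat.cast_add, hh, ZMod.natCast_self]
    rw [hsum, tors_zero, tors_half h2]
    exact (two_d 1).symm

lemma tors_eq_zero (a : ZMod m) (ha : a + a = 0) (h : tors a = 0) : a = 0 := by
  rcases two_tor a ha with rfl | ⟨h2, rfl⟩
  · rfl
  · exfalso
    haveI : Nontrivial (ZMod (Nat.gcd m 2)) := by rw [hd2 h2]; infer_instance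
    rw [tors_half h2] at h
    exact one_ne_zero h

lemma half_exists (a : ZMod m) (h : castd a = 0) : ∃ b : ZMod m, a = b + b := by
  have hv : ((a.val : ℕ) : ZMod (Nat.gcd m 2)) = 0 := by
    have hmc : castd ((a.val : ℕ) : ZMod m) = ((a.val : ℕ) : ZMod (Nat.gcd m 2)) :=
      map_natCast castd a.val
    rw [ZMod.natCast_zmod_val] at hmc
    rw [← hmc, h]
  have hdvd : Nat.gcd m 2 ∣ a.val := (ZMod.natCast_eq_zero_iff _ _).1 hv
  by_cases h2 : 2 ∣ m
  · rw [hd2 h2] at hdvd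
    refine ⟨((a.val / 2 : ℕ) : ZMod m), ?_⟩
    rw [← Nat.cast_add, show a.val/2 + a.val/2 = a.val by omega, ZMod.natCast_zmod_val]
  · refine ⟨(((m+1)/2 : ℕ) : ZMod m) * a, ?_⟩
    have hodd : ¬ (m % 2 = 0) := fun hc => h2 (Nat.dvd_of_mod_eq_zero hc)
    have : (((m+1)/2 : ℕ) : ZMod m) * a + (((m+1)/2 : ℕ) : ZMod m) * a
        = (((m+1)/2 + (m+1)/2 : ℕ) : ZMod m) * a := by push_cast; ring
    rw [this, show (m+1)/2 + (m+1)/2 = m + 1 by omega]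
    push_cast [ZMod.natCast_self]
    ring

def Phi0 (f : DihedralGroup k × DihedralGroup k → ZMod m) :
    ZMod (Nat.gcd m 2) × ZMod (Nat.gcd m 2) × ZMod (Nat.gcd m 2) :=
  (castd (Iu f), castd (Iv f), tors (Iτ f))

lemma Phi0_zero [NeZero k] [NeZero m] :
    Phi0 (k := k) (m := m) (fun _ => 0) = 0 := by
  have hIu : Iu (k := k) (m := m) (fun _ => 0) = 0 := by simp [Iu]
  have hIv : Iv (k := k) (m := m) (fun _ => 0) = 0 := by simp [Iv]
  have hnrm : nrm (k := k) (m := m) (fun _ => 0) = (fun _ => 0) := by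
    funext p; simp [nrm]
  have hSf : ∀ n, Sf (k := k) (m := m) (fun _ => 0) n = 0 := fun n =>
    Finset.sum_eq_zero fun t _ => rfl
  have hIt : Iτ (k := k) (m := m) (fun _ => 0) = 0 := by
    rw [Iτ, hnrm, Tf_def, hSf, cf_def, bf_def, hSf, Tf_def, hSf]
    simp
  rw [Phi0, hIu, hIv, hIt, tors_zero, map_zero]
  rfl

lemma Phi0_add [NeZero k] [NeZero m] (hk2 : 2 ≤ k) (hke : 2 * (k/2) = k)
    (f g : DihedralGroup k × DihedralGroup k → ZMod m)
    (hf : IsCo k m f) (hg : IsCo k m g) :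
    Phi0 (fun p => f p + g p) = Phi0 f + Phi0 g := by
  rw [Phi0, Phi0, Phi0, Iu_add, Iv_add, Itau_add, map_add, map_add,
    tors_add _ _ (Itau_tor hk2 hke f hf) (Itau_tor hk2 hke g hg)]
  rfl

lemma Phi0_dfun [NeZero k] [NeZero m] (hk2 : 2 ≤ k) (hke : 2 * (k/2) = k)
    (x : DihedralGroup k → ZMod m) : Phi0 (dfun x) = 0 := by
  rw [Phi0, Iu_dfun, Iv_dfun, Itau_dfun hk2 hke, map_add, map_add, tors_zero]
  have t1 : castd (x (sr 0)) + castd (x (sr 0)) = 0 := two_d _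
  have t2 : castd (x (sr 1)) + castd (x (sr 1)) = 0 := two_d _
  rw [t1, t2]
  rfl

lemma Phi0_gen [NeZero k] [NeZero m] (hk2 : 2 ≤ k) (hke : 2 * (k/2) = k)
    (p : ZMod (Nat.gcd m 2) × ZMod (Nat.gcd m 2) × ZMod (Nat.gcd m 2)) :
    ∃ F : DihedralGroup k × DihedralGroup k → ZMod m, IsCo k m F ∧ Phi0 F = p := by
  obtain ⟨p1, p2, p3⟩ := p
  set a : ZMod m := ((p1.val : ℕ) : ZMod m) with ha
  set b : ZMod m := (((p2 - p1).val : ℕ) : ZMod m) with hb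
  set wv : ZMod m := ((m/2 * p3.val : ℕ) : ZMod m) with hwv
  have hw : wv + wv = 0 := by
    by_cases h2 : 2 ∣ m
    · rw [hwv, ← Nat.cast_add, ← Nat.add_mul, show m/2 + m/2 = m by omega]
      push_cast [ZMod.natCast_self]
      ring
    · have hp3 : p3 = 0 := by
        haveI : Subsingleton (ZMod (Nat.gcd m 2)) := by rw [hd1 h2]; infer_instance
        exact Subsingleton.elim _ _
      rw [hwv, hp3, ZMod.val_zero, Nat.mul_zero, Nat.cast_zero, add_zero]
  refine ⟨fun q => (Gen1 a q + Gen2 b q) + Gen3 wv q,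
    IsCo_add (IsCo_add (gen1_co a) (gen2_co hke b)) (gen3_co hk2 wv hw), ?_⟩
  have hIu : Iu (fun q => (Gen1 (k := k) a q + Gen2 b q) + Gen3 wv q) = a := by
    have e1 : Iu (fun q => (Gen1 (k := k) a q + Gen2 b q) + Gen3 wv q)
        = Iu (fun q => Gen1 (k := k) a q + Gen2 b q) + Iu (Gen3 (k := k) wv) := Iu_add _ _
    rw [e1, Iu_add (Gen1 a) (Gen2 b), Iu_gen1, Iu_gen2, Iu_gen3 hk2, add_zero, add_zero]
  have hIv : Iv (fun q => (Gen1 (k := k) a q + Gen2 b q) + Gen3 wv q) = a + b := by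
    have e1 : Iv (fun q => (Gen1 (k := k) a q + Gen2 b q) + Gen3 wv q)
        = Iv (fun q => Gen1 (k := k) a q + Gen2 b q) + Iv (Gen3 (k := k) wv) := Iv_add _ _
    rw [e1, Iv_add (Gen1 a) (Gen2 b), Iv_gen1, Iv_gen2 hk2, Iv_gen3 hk2, add_zero]
  have hIt : Iτ (fun q => (Gen1 (k := k) a q + Gen2 b q) + Gen3 wv q) = wv := by
    have e1 : Iτ (fun q => (Gen1 (k := k) a q + Gen2 b q) + Gen3 wv q)
        = Iτ (fun q => Gen1 (k := k) a q + Gen2 b q) + Iτ (Gen3 (k := k) wv) := Itau_add _ _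
    rw [e1, Itau_add (Gen1 a) (Gen2 b), Itau_gen1, Itau_gen2 hk2 hke,
      Itau_gen3 hk2 wv hw, add_zero, zero_add]
  rw [Phi0, hIu, hIv, hIt]
  have hc1 : castd a = p1 := by
    rw [ha, map_natCast, ZMod.natCast_zmod_val]
  have hc2 : castd (a + b) = p2 := by
    rw [map_add, hc1, hb, map_natCast, ZMod.natCast_zmod_val]
    ring
  have hc3 : tors wv = p3 := by
    by_cases h2 : 2 ∣ m
    · have hlt : p3.val < 2 := by
        have hvl := ZMod.val_lt p3
        have hgg := hd2 (m := m) h2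
        omega
      rcases (by omega : p3.val = 0 ∨ p3.val = 1) with hp | hp
      · have h3 : p3 = 0 := by rw [← ZMod.natCast_zmod_val p3, hp, Nat.cast_zero]
        rw [hwv, hp, Nat.mul_zero, Nat.cast_zero, tors_zero, h3]
      · have h3 : p3 = 1 := by rw [← ZMod.natCast_zmod_val p3, hp, Nat.cast_one]
        rw [hwv, hp, Nat.mul_one, tors_half h2, h3]
    · haveI : Subsingleton (ZMod (Nat.gcd m 2)) := by rw [hd1 h2]; infer_instance
      exact Subsingleton.elim _ _
  rw [hc1, hc2, hc3]

lemma cobound_of_Phi0_zero [NeZero k] [NeZero m] (hk2 : 2 ≤ k) (hke : 2 * (k/2) = k)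
    (f : DihedralGroup k × DihedralGroup k → ZMod m) (hco : IsCo k m f)
    (h : Phi0 f = 0) :
    ∃ x : DihedralGroup k → ZMod m, ∀ g h', x h' - x (g * h') + x g = f (g, h') := by
  have h1 : castd (Iu f) = 0 := congrArg Prod.fst h
  have h2 : castd (Iv f) = 0 := congrArg (fun z => z.2.1) h
  have h3 : tors (Iτ f) = 0 := congrArg (fun z => z.2.2) h
  have hu := half_exists _ h1
  have hv := half_exists _ h2
  have ht := tors_eq_zero _ (Itau_tor hk2 hke f hco) h3
  obtain ⟨x, hx⟩ := key f hk2 hke hco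
    (by obtain ⟨bb, hbb⟩ := hu; exact ⟨bb, hbb⟩)
    (by obtain ⟨bb, hbb⟩ := hv; exact ⟨bb, hbb⟩) ht
  exact ⟨x, hx⟩

end torsd

end Stmt5Aux

open Stmt5Aux DihedralGroup groupCohomology in
/-- Let `k` be an even positive integer and `m` any positive integer. Then the
second group cohomology `H²(D₂ₖ, ℤ/m)` of the dihedral group of order `2k` with coefficients
in `ℤ/m` (trivial action) is isomorphic, as an abelian group, to the direct sum of three copies
of `ℤ/gcd(m, 2)`. -/
theorem stmt_5 (k m : ℕ) (hk : 0 < k) (hkeven : Even k) (hm : 0 < m) :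
    Nonempty
      ((groupCohomology (Rep.trivial ℤ (DihedralGroup k) (ZMod m)) 2) ≃+
        (ZMod (Nat.gcd m 2) × ZMod (Nat.gcd m 2) × ZMod (Nat.gcd m 2))) := by
  haveI : NeZero k := ⟨hk.ne'⟩
  haveI : NeZero m := ⟨hm.ne'⟩
  obtain ⟨K, hK⟩ := hkeven
  have hk2 : 2 ≤ k := by omega
  have hke : 2 * (k/2) = k := by omega
  have hmem : ∀ f : DihedralGroup k × DihedralGroup k → ZMod m,
      f ∈ cocycles₂ (Rep.trivial ℤ (DihedralGroup k) (ZMod m)) ↔ IsCo k m f := by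
    intro f
    rw [mem_cocycles₂_iff]
    constructor
    · intro H g h j
      have := H g h j
      rwa [Rep.trivial_ρ_apply] at this
    · intro H g h j
      rw [Rep.trivial_ρ_apply]
      exact H g h j
  let Φa : cocycles₂ (Rep.trivial ℤ (DihedralGroup k) (ZMod m)) →+
      (ZMod (Nat.gcd m 2) × ZMod (Nat.gcd m 2) × ZMod (Nat.gcd m 2)) :=
  { toFun := fun f => Phi0 (f : DihedralGroup k × DihedralGroup k → ZMod m)
    map_zero' := Phi0_zero
    map_add' := fun f g => by
      have hcf : IsCo k m (f : DihedralGroup k × DihedralGroup k → ZMod m) :=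
        (hmem _).1 f.2
      have hcg : IsCo k m (g : DihedralGroup k × DihedralGroup k → ZMod m) :=
        (hmem _).1 g.2
      have hcoe : ((f + g : cocycles₂ (Rep.trivial ℤ (DihedralGroup k) (ZMod m))) :
          DihedralGroup k × DihedralGroup k → ZMod m)
          = fun p => (f : DihedralGroup k × DihedralGroup k → ZMod m) p
            + (g : DihedralGroup k × DihedralGroup k → ZMod m) p := rfl
      show Phi0 _ = _
      rw [hcoe, Phi0_add hk2 hke _ _ hcf hcg] }
  let π' : cocycles₂ (Rep.trivial ℤ (DihedralGroup k) (ZMod m)) →+ H2 (Rep.trivial ℤ (DihedralGroup k) (ZMod m)) := (H2π (Rep.trivial ℤ (DihedralGroup k) (ZMod m))).hom.toAddMonoidHom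
  have hπs : Function.Surjective π' := (ModuleCat.epi_iff_surjective _).1 inferInstance
  have hkerEq : π'.ker = Φa.ker := by
    ext f
    rw [AddMonoidHom.mem_ker, AddMonoidHom.mem_ker]
    change H2π (Rep.trivial ℤ (DihedralGroup k) (ZMod m)) f = 0 ↔ Phi0 f = 0
    rw [H2π_eq_zero_iff]
    constructor
    · intro hfb
      obtain ⟨x, hx⟩ := hfb
      have hfd : (f : DihedralGroup k × DihedralGroup k → ZMod m) = dfun x := by
        funext p
        have h1 := congrFun hx p
        simp only [d₁₂_hom_apply, Rep.trivial_ρ_apply] at h1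
        simp only [dfun]
        exact h1.symm
      rw [hfd]
      exact Phi0_dfun hk2 hke x
    · intro hq
      have hco := (hmem _).1 f.2
      obtain ⟨x, hx⟩ := cobound_of_Phi0_zero hk2 hke _ hco hq
      refine ⟨x, funext fun p => ?_⟩
      simp only [d₁₂_hom_apply, Rep.trivial_ρ_apply]
      exact hx p.1 p.2
  have hsurj : Function.Surjective Φa := by
    intro p
    obtain ⟨F, hFco, hFval⟩ := Phi0_gen hk2 hke p
    have hFmem : F ∈ cocycles₂ (Rep.trivial ℤ (DihedralGroup k) (ZMod m)) :=
      (hmem F).2 hFco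
    exact ⟨⟨F, hFmem⟩, hFval⟩
  exact ⟨(QuotientAddGroup.quotientKerEquivOfSurjective π' hπs).symm.trans
    ((QuotientAddGroup.quotientAddEquivOfEq hkerEq).trans
      (QuotientAddGroup.quotientKerEquivOfSurjective Φa hsurj))⟩
end

section
/- Let m₊ be a positive integer with gcd(m₊, 6) = 1, let r be a natural number, and let α : ℤ/3^{r+1} → Aut(ℤ/2 × ℤ/2) be a homomorphism whose image has order 3. Then the group ℤ/m₊ × ((ℤ/2 × ℤ/2) ⋊_α ℤ/3^{r+1}) is isomorphic to a subgroup of SO(5) (indeed of the block subgroup SO(3) × SO(2) of SO(5)). -/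
/-- The special orthogonal group `SO(n)`: real orthogonal `n × n` matrices of determinant `1`,
as a subgroup of the real orthogonal group. -/
def SO (n : ℕ) : Subgroup (Matrix.orthogonalGroup (Fin n) ℝ) where
  carrier := {A | Matrix.det (A : Matrix (Fin n) (Fin n) ℝ) = 1}
  one_mem' := by simp
  mul_mem' := by
    intro a b ha hb
    simp only [Set.mem_setOf_eq, Submonoid.coe_mul, Matrix.det_mul] at *
    rw [ha, hb, mul_one]
  inv_mem' := by
    intro a ha
    simp only [Set.mem_setOf_eq] at *
    rw [← Unitary.star_eq_inv, Unitary.coe_star, Matrix.star_eq_conjTranspose,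
      Matrix.det_conjTranspose, ha, star_one]

namespace Stmt19Aux

open Matrix Complex

abbrev V : Type := Multiplicative (ZMod 2) × Multiplicative (ZMod 2)

def nz : Fin 3 → V :=
  ![(Multiplicative.ofAdd 1, 1), (1, Multiplicative.ofAdd 1),
    (Multiplicative.ofAdd 1, Multiplicative.ofAdd 1)]

lemma nz_ne_one (i : Fin 3) : nz i ≠ 1 := by fin_cases i <;> decide

lemma nz_inj : Function.Injective nz := by decide

lemma exists_nz : ∀ u : V, u ≠ 1 → ∃ k, nz k = u := by decide

lemma aut_nz_ne_one (φ : MulAut V) (i : Fin 3) : φ (nz i) ≠ 1 := fun h =>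
  nz_ne_one i (φ.injective (by rw [h, _root_.map_one]))

noncomputable def chi (v w : V) : ℝ := if v = 1 ∨ v = w then 1 else -1

lemma chi_one (w : V) : chi 1 w = 1 := by simp [chi]

lemma chi_sq (v w : V) : chi v w * chi v w = 1 := by
  unfold chi; split_ifs <;> norm_num

lemma chi_eq_one {v w : V} (h : chi v w = 1) : v = 1 ∨ v = w := by
  by_cases hc : v = 1 ∨ v = w
  · exact hc
  · exfalso; rw [chi, if_neg hc] at h; norm_num at h

lemma chi_mul (a b w : V) (hw : w ≠ 1) : chi (a * b) w = chi a w * chi b w := by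
  have h : (a * b = 1 ∨ a * b = w) ↔ ((a = 1 ∨ a = w) ↔ (b = 1 ∨ b = w)) := by
    revert a b w hw; decide
  simp only [chi]
  rw [if_congr h rfl rfl]
  by_cases h1 : a = 1 ∨ a = w <;> by_cases h2 : b = 1 ∨ b = w <;>
    simp [h1, h2]

lemma chi_aut (φ : MulAut V) (a b : V) : chi (φ a) (φ b) = chi a b := by
  unfold chi
  rw [if_congr (or_congr (EmbeddingLike.map_eq_one_iff) φ.injective.eq_iff) rfl rfl]

lemma chi_prod (v : V) : chi v (nz 0) * chi v (nz 1) * chi v (nz 2) = 1 := by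
  have h4 : v = 1 ∨ v = nz 0 ∨ v = nz 1 ∨ v = nz 2 := by revert v; decide
  have eSelf : ∀ v : V, chi v v = 1 := fun v => by rw [chi, if_pos (Or.inr rfl)]
  have eNe : ∀ v w : V, v ≠ 1 → v ≠ w → chi v w = -1 := by
    intro v w h1 h2; rw [chi, if_neg]; tauto
  rcases h4 with h | h | h | h <;> subst h
  · rw [chi_one, chi_one, chi_one]; norm_num
  · rw [eSelf, eNe _ _ (by decide) (by decide), eNe _ _ (by decide) (by decide)]; norm_num
  · rw [eNe _ _ (by decide) (by decide), eSelf, eNe _ _ (by decide) (by decide)]; norm_num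
  · rw [eNe _ _ (by decide) (by decide), eNe _ _ (by decide) (by decide), eSelf]; norm_num


noncomputable def Dm (v : V) : Matrix (Fin 3) (Fin 3) ℝ :=
  Matrix.diagonal (fun i => chi v (nz i))

noncomputable def Pm (φ : MulAut V) : Matrix (Fin 3) (Fin 3) ℝ :=
  Matrix.of fun i j => if nz i = φ (nz j) then 1 else 0

lemma Dm_one : Dm 1 = 1 := by
  simp [Dm, chi_one]

lemma Dm_mul (v w : V) : Dm (v * w) = Dm v * Dm w := by
  have h : (fun i => chi (v * w) (nz i)) = fun i => chi v (nz i) * chi w (nz i) :=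
    funext fun i => chi_mul v w (nz i) (nz_ne_one i)
  rw [Dm, Dm, Dm, h, Matrix.diagonal_mul_diagonal]

lemma Dm_orth (v : V) : Dm v * (Dm v)ᵀ = 1 := by
  simp [Dm, Matrix.diagonal_transpose, Matrix.diagonal_mul_diagonal, chi_sq]

lemma det_Dm (v : V) : (Dm v).det = 1 := by
  rw [Dm, Matrix.det_diagonal, Fin.prod_univ_three]
  exact chi_prod v

lemma Pm_one : Pm 1 = 1 := by
  ext i j
  simp [Pm, Matrix.one_apply, nz_inj.eq_iff]

lemma Pm_mul (φ ψ : MulAut V) : Pm (φ * ψ) = Pm φ * Pm ψ := by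
  ext i j
  obtain ⟨k0, hk0⟩ := exists_nz (ψ (nz j)) (aut_nz_ne_one ψ j)
  rw [Matrix.mul_apply, Finset.sum_eq_single k0]
  · simp only [Pm, Matrix.of_apply]
    rw [if_pos hk0, mul_one, hk0, MulAut.mul_apply]
  · intro k _ hkne
    have hne : nz k ≠ ψ (nz j) := fun h => hkne (nz_inj (h.trans hk0.symm))
    simp [Pm, hne]
  · intro h; exact absurd (Finset.mem_univ k0) h

lemma Pm_orth (φ : MulAut V) : Pm φ * (Pm φ)ᵀ = 1 := by
  ext i j
  obtain ⟨k0, hk0⟩ := exists_nz (φ⁻¹ (nz i)) (aut_nz_ne_one _ i)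
  have hk0' : φ (nz k0) = nz i := by
    rw [hk0, MulAut.inv_def]; exact φ.apply_symm_apply _
  rw [Matrix.mul_apply, Finset.sum_eq_single k0]
  · simp only [Pm, Matrix.transpose_apply, Matrix.of_apply, hk0']
    rw [if_true, one_mul, Matrix.one_apply]
    by_cases hij : i = j
    · subst hij; rw [if_pos rfl, if_pos rfl]
    · rw [if_neg (fun h => hij (nz_inj h).symm), if_neg hij]
  · intro k _ hkne
    have hne : nz i ≠ φ (nz k) := fun h =>
      hkne (nz_inj (φ.injective (hk0'.trans h)).symm)
    simp [Pm, hne]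
  · intro h; exact absurd (Finset.mem_univ k0) h

lemma Pm_Dm (φ : MulAut V) (v : V) : Pm φ * Dm v = Dm (φ v) * Pm φ := by
  ext i j
  simp only [Dm]
  rw [Matrix.mul_diagonal, Matrix.diagonal_mul]
  by_cases h : nz i = φ (nz j)
  · simp only [Pm, Matrix.of_apply, if_pos h]
    rw [one_mul, mul_one, h, chi_aut]
  · simp [Pm, h]


noncomputable def Trep (z : ℂ) : Matrix (Fin 2) (Fin 2) ℝ :=
  !![z.re, -z.im; z.im, z.re]

lemma Trep_one : Trep 1 = 1 := by
  rw [Trep, Matrix.one_fin_two]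
  norm_num

lemma Trep_mul (z w : ℂ) : Trep (z * w) = Trep z * Trep w := by
  ext i j
  fin_cases i <;> fin_cases j <;>
    simp [Trep, Matrix.mul_apply, Fin.sum_univ_two, Complex.mul_re, Complex.mul_im] <;> ring

lemma Trep_orth {z : ℂ} (h : z.re * z.re + z.im * z.im = 1) : Trep z * (Trep z)ᵀ = 1 := by
  ext i j
  fin_cases i <;> fin_cases j <;>
    simp [Trep, Matrix.mul_apply, Fin.sum_univ_two, Matrix.one_apply, Matrix.transpose_apply,
      Matrix.vecHead, Matrix.vecTail] <;> linarith

lemma det_Trep {z : ℂ} (h : z.re * z.re + z.im * z.im = 1) : (Trep z).det = 1 := by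
  rw [Trep, Matrix.det_fin_two_of]
  linarith

lemma Trep_eq_one {z : ℂ} (h : Trep z = 1) : z = 1 := by
  have h00 := congrFun (congrFun h 0) 0
  have h10 := congrFun (congrFun h 1) 0
  simp [Trep, Matrix.one_apply] at h00 h10
  exact Complex.ext h00 h10

noncomputable def zeta (N : ℕ) : ℂ := Complex.exp (2 * Real.pi * Complex.I / N)

lemma zeta_prim (N : ℕ) [NeZero N] : IsPrimitiveRoot (zeta N) N :=
  Complex.isPrimitiveRoot_exp N (NeZero.ne N)

lemma zeta_pow_self (N : ℕ) [NeZero N] : zeta N ^ N = 1 :=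
  (zeta_prim N).pow_eq_one

noncomputable def xi (N : ℕ) (a : ZMod N) : ℂ := zeta N ^ a.val

lemma xi_mul (N : ℕ) [NeZero N] (a b : ZMod N) : xi N (a + b) = xi N a * xi N b := by
  rw [xi, xi, xi, ← pow_add, ZMod.val_add]
  conv_rhs => rw [show a.val + b.val = N * ((a.val + b.val) / N) + (a.val + b.val) % N from
      (Nat.div_add_mod _ _).symm]
  rw [pow_add, pow_mul, zeta_pow_self, one_pow, one_mul]

lemma xi_zero (N : ℕ) [NeZero N] : xi N 0 = 1 := by
  rw [xi, ZMod.val_zero, pow_zero]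

lemma xi_norm (N : ℕ) [NeZero N] (a : ZMod N) : ‖xi N a‖ = 1 := by
  rw [xi, norm_pow]
  have : ‖zeta N‖ = 1 :=
    Complex.norm_eq_one_of_pow_eq_one (zeta_pow_self N) (NeZero.ne N)
  rw [this, one_pow]

lemma norm_sq_one {z : ℂ} (h : ‖z‖ = 1) : z.re * z.re + z.im * z.im = 1 := by
  have := Complex.sq_norm z
  rw [h, Complex.normSq_apply] at this
  linarith [this]


lemma V_eq_one : ∀ {v : V}, (v = 1 ∨ v = nz 0) → (v = 1 ∨ v = nz 1) →
    (v = 1 ∨ v = nz 2) → v = 1 := by decide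

section Rho
variable {s : ℕ} (α : Multiplicative (ZMod s) →* MulAut V)

noncomputable def rho3 (g : V ⋊[α] Multiplicative (ZMod s)) : Matrix (Fin 3) (Fin 3) ℝ :=
  Dm g.left * Pm (α g.right)

lemma rho3_one : rho3 α 1 = 1 := by
  rw [rho3, SemidirectProduct.one_left, SemidirectProduct.one_right, Dm_one, _root_.map_one,
    Pm_one, one_mul]

lemma rho3_mul (g h : V ⋊[α] Multiplicative (ZMod s)) :
    rho3 α (g * h) = rho3 α g * rho3 α h := by
  rw [rho3, rho3, rho3, SemidirectProduct.mul_left, SemidirectProduct.mul_right,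
    Dm_mul, _root_.map_mul, Pm_mul]
  simp only [mul_assoc]
  congr 1
  rw [← mul_assoc, ← Pm_Dm, mul_assoc]

lemma rho3_orth (g : V ⋊[α] Multiplicative (ZMod s)) :
    rho3 α g * (rho3 α g)ᵀ = 1 := by
  rw [rho3, Matrix.transpose_mul,
    show Dm g.left * Pm (α g.right) * ((Pm (α g.right))ᵀ * (Dm g.left)ᵀ)
      = Dm g.left * (Pm (α g.right) * (Pm (α g.right))ᵀ) * (Dm g.left)ᵀ by
        simp only [mul_assoc],
    Pm_orth, mul_one, Dm_orth]

lemma det_rho3 (g : V ⋊[α] Multiplicative (ZMod s)) (h3 : (α g.right) ^ 3 = 1) :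
    (rho3 α g).det = 1 := by
  rw [rho3, Matrix.det_mul, det_Dm, one_mul]
  have hP : Pm (α g.right) ^ 3 = 1 := by
    rw [pow_succ, pow_two, ← Pm_mul, ← Pm_mul, ← pow_two, ← pow_succ, h3, Pm_one]
  have hd : (Pm (α g.right)).det ^ 3 = 1 := by
    rw [← Matrix.det_pow, hP, Matrix.det_one]
  nlinarith [hd, sq_nonneg ((Pm (α g.right)).det - 1), sq_nonneg ((Pm (α g.right)).det + 1)]

lemma rho3_eq_one (g : V ⋊[α] Multiplicative (ZMod s)) (hr : g.right = 1)
    (h : rho3 α g = 1) : g = 1 := by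
  have hD : Dm g.left = 1 := by
    rw [rho3, hr, _root_.map_one, Pm_one, mul_one] at h
    exact h
  have hchi : ∀ i : Fin 3, chi g.left (nz i) = 1 := by
    intro i
    have := congrFun (congrFun hD i) i
    simpa [Dm, Matrix.diagonal_apply_eq, Matrix.one_apply] using this
  have hv : g.left = 1 :=
    V_eq_one (chi_eq_one (hchi 0)) (chi_eq_one (hchi 1)) (chi_eq_one (hchi 2))
  exact SemidirectProduct.ext (by rw [hv, SemidirectProduct.one_left])
    (by rw [hr, SemidirectProduct.one_right])

end Rho


noncomputable def E5 : Matrix (Fin 3 ⊕ Fin 2) (Fin 3 ⊕ Fin 2) ℝ ≃ₐ[ℝ] Matrix (Fin 5) (Fin 5) ℝ :=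
  Matrix.reindexAlgEquiv ℝ ℝ finSumFinEquiv

lemma E5_transpose (X : Matrix (Fin 3 ⊕ Fin 2) (Fin 3 ⊕ Fin 2) ℝ) : (E5 X)ᵀ = E5 Xᵀ := by
  simp [E5, Matrix.reindexAlgEquiv_apply, Matrix.transpose_reindex]

lemma E5_det (X : Matrix (Fin 3 ⊕ Fin 2) (Fin 3 ⊕ Fin 2) ℝ) : (E5 X).det = X.det := by
  rw [E5, Matrix.reindexAlgEquiv_apply]
  exact Matrix.det_reindex_self _ _

lemma blocks_orth {A : Matrix (Fin 3) (Fin 3) ℝ} {D : Matrix (Fin 2) (Fin 2) ℝ}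
    (hA : A * Aᵀ = 1) (hD : D * Dᵀ = 1) :
    (Matrix.fromBlocks A 0 0 D) * (Matrix.fromBlocks A 0 0 D)ᵀ = 1 := by
  rw [Matrix.fromBlocks_transpose, Matrix.fromBlocks_multiply]
  simp only [Matrix.transpose_zero, Matrix.mul_zero, Matrix.zero_mul, add_zero, zero_add,
    hA, hD]
  exact Matrix.fromBlocks_one

section Main

variable (mp s : ℕ) [NeZero mp] [NeZero s] (α : Multiplicative (ZMod s) →* MulAut V)

noncomputable def bigMat (g : Multiplicative (ZMod mp) × (V ⋊[α] Multiplicative (ZMod s))) :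
    Matrix (Fin 5) (Fin 5) ℝ :=
  E5 (Matrix.fromBlocks (rho3 α g.2) 0 0
    (Trep (xi mp (Multiplicative.toAdd g.1) * xi s (Multiplicative.toAdd g.2.right))))

lemma bigMat_abs (g : Multiplicative (ZMod mp) × (V ⋊[α] Multiplicative (ZMod s))) :
    ‖xi mp (Multiplicative.toAdd g.1) * xi s (Multiplicative.toAdd g.2.right)‖ = 1 := by
  rw [norm_mul, xi_norm, xi_norm, mul_one]

lemma bigMat_one : bigMat mp s α 1 = 1 := by
  rw [bigMat]
  have h1 : (1 : Multiplicative (ZMod mp) × (V ⋊[α] Multiplicative (ZMod s))).2 = 1 := rfl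
  have h2 : (1 : Multiplicative (ZMod mp) × (V ⋊[α] Multiplicative (ZMod s))).1 = 1 := rfl
  rw [h1, h2, rho3_one, SemidirectProduct.one_right, toAdd_one, xi_zero, toAdd_one, xi_zero,
    one_mul, Trep_one, Matrix.fromBlocks_one, _root_.map_one]

lemma bigMat_mul (g h : Multiplicative (ZMod mp) × (V ⋊[α] Multiplicative (ZMod s))) :
    bigMat mp s α (g * h) = bigMat mp s α g * bigMat mp s α h := by
  rw [bigMat, bigMat, bigMat, ← _root_.map_mul, Matrix.fromBlocks_multiply]
  simp only [Matrix.mul_zero, Matrix.zero_mul, add_zero, zero_add]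
  have hsnd : (g * h).2 = g.2 * h.2 := rfl
  have hfst : (g * h).1 = g.1 * h.1 := rfl
  rw [hsnd, hfst, rho3_mul, SemidirectProduct.mul_right, toAdd_mul, toAdd_mul,
    xi_mul, xi_mul, ← Trep_mul]
  ring_nf

lemma bigMat_orth (g : Multiplicative (ZMod mp) × (V ⋊[α] Multiplicative (ZMod s))) :
    bigMat mp s α g ∈ Matrix.orthogonalGroup (Fin 5) ℝ := by
  rw [Matrix.mem_orthogonalGroup_iff]
  have hstar : star (bigMat mp s α g) = (bigMat mp s α g)ᵀ := by
    ext i j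
    simp [Matrix.star_apply]
  rw [bigMat, E5_transpose, ← _root_.map_mul,
    blocks_orth (rho3_orth α g.2) (Trep_orth (norm_sq_one (bigMat_abs mp s α g))),
    _root_.map_one]

lemma bigMat_det (g : Multiplicative (ZMod mp) × (V ⋊[α] Multiplicative (ZMod s)))
    (h3 : (α g.2.right) ^ 3 = 1) : (bigMat mp s α g).det = 1 := by
  rw [bigMat, E5_det, Matrix.det_fromBlocks_zero₂₁, det_rho3 α g.2 h3,
    det_Trep (norm_sq_one (bigMat_abs mp s α g)), one_mul]

lemma bigMat_eq_one (hcop : Nat.Coprime mp s)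
    (g : Multiplicative (ZMod mp) × (V ⋊[α] Multiplicative (ZMod s)))
    (h : bigMat mp s α g = 1) : g = 1 := by
  rw [bigMat] at h
  have h1 : Matrix.fromBlocks (rho3 α g.2) 0 0
      (Trep (xi mp (Multiplicative.toAdd g.1) * xi s (Multiplicative.toAdd g.2.right)))
      = Matrix.fromBlocks 1 0 0 1 := by
    rw [Matrix.fromBlocks_one]
    apply E5.injective
    rw [h, _root_.map_one]
  obtain ⟨hA, -, -, hD⟩ := Matrix.fromBlocks_inj.mp h1
  have hz : xi mp (Multiplicative.toAdd g.1) * xi s (Multiplicative.toAdd g.2.right) = 1 :=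
    Trep_eq_one hD
  set a := Multiplicative.toAdd g.1 with ha
  set c := Multiplicative.toAdd g.2.right with hc
  have hza : zeta mp ^ a.val * zeta s ^ c.val = 1 := hz
  have hpow : zeta mp ^ (a.val * s) = 1 := by
    have h2 : (zeta mp ^ a.val * zeta s ^ c.val) ^ s = 1 := by rw [hza, one_pow]
    have h3 : (zeta mp ^ a.val) ^ s * (zeta s ^ c.val) ^ s = 1 := by
      rw [← mul_pow]; exact h2
    have h4 : (zeta s ^ c.val) ^ s = 1 := by
      rw [← pow_mul, mul_comm, pow_mul, zeta_pow_self, one_pow]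
    rw [h4, mul_one, ← pow_mul] at h3
    exact h3
  have ha0 : a.val = 0 :=
    Nat.eq_zero_of_dvd_of_lt
      (Nat.Coprime.dvd_of_dvd_mul_right hcop (((zeta_prim mp).pow_eq_one_iff_dvd _).mp hpow))
      (ZMod.val_lt a)
  have hc0 : c.val = 0 := by
    rw [ha0, pow_zero, one_mul] at hza
    exact Nat.eq_zero_of_dvd_of_lt (((zeta_prim s).pow_eq_one_iff_dvd _).mp hza)
      (ZMod.val_lt c)
  have hg1 : g.1 = 1 := by
    have h5 : a = 0 := (ZMod.val_eq_zero a).mp ha0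
    have : Multiplicative.toAdd g.1 = Multiplicative.toAdd (1 : Multiplicative (ZMod mp)) := by
      rw [← ha, h5, toAdd_one]
    exact Multiplicative.toAdd.injective this
  have hgr : g.2.right = 1 := by
    have h5 : c = 0 := (ZMod.val_eq_zero c).mp hc0
    have : Multiplicative.toAdd g.2.right
        = Multiplicative.toAdd (1 : Multiplicative (ZMod s)) := by
      rw [← hc, h5, toAdd_one]
    exact Multiplicative.toAdd.injective this
  have hg2 : g.2 = 1 := rho3_eq_one α g.2 hgr hA
  exact Prod.ext hg1 hg2

end Main

end Stmt19Aux

open Stmt19Aux in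
set_option maxRecDepth 10000 in
/-- Let `m₊` be a positive integer with `gcd(m₊, 6) = 1`, let `r` be a
natural number, and let `α : ℤ/3^(r+1) → Aut(ℤ/2 × ℤ/2)` be a homomorphism whose image has
order 3. Then `ℤ/m₊ × ((ℤ/2 × ℤ/2) ⋊_α ℤ/3^(r+1))` is isomorphic to a subgroup of `SO(5)`. -/
theorem stmt_19 (mp r : ℕ) (hmp : 0 < mp) (hgcd : Nat.gcd mp 6 = 1)
    (α : Multiplicative (ZMod (3 ^ (r + 1))) →*
      MulAut (Multiplicative (ZMod 2) × Multiplicative (ZMod 2)))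
    (hα : Nat.card α.range = 3) :
    ∃ K : Subgroup (SO 5),
      Nonempty
        ((Multiplicative (ZMod mp) ×
          ((Multiplicative (ZMod 2) × Multiplicative (ZMod 2)) ⋊[α]
            Multiplicative (ZMod (3 ^ (r + 1))))) ≃* K) := by
  haveI : NeZero mp := ⟨hmp.ne'⟩
  haveI : NeZero (3 ^ (r + 1)) := ⟨pow_ne_zero _ (by norm_num)⟩
  haveI : Finite α.range := Nat.finite_of_card_ne_zero (by rw [hα]; norm_num)
  have hcube : ∀ c : Multiplicative (ZMod (3 ^ (r + 1))), (α c) ^ 3 = 1 := by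
    intro c
    have h1 : (⟨α c, ⟨c, rfl⟩⟩ : α.range) ^ 3 = 1 := by
      have h0 := pow_card_eq_one' (x := (⟨α c, ⟨c, rfl⟩⟩ : α.range))
      rwa [hα] at h0
    have h2 := congrArg (Subtype.val) h1
    simpa using h2
  have hcop : Nat.Coprime mp (3 ^ (r + 1)) :=
    Nat.Coprime.pow_right _ (Nat.Coprime.coprime_dvd_right (by norm_num) hgcd)
  let F : (Multiplicative (ZMod mp) ×
        ((Multiplicative (ZMod 2) × Multiplicative (ZMod 2)) ⋊[α]
          Multiplicative (ZMod (3 ^ (r + 1))))) →* (SO 5) :=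
    { toFun := fun g =>
        ⟨⟨bigMat mp (3 ^ (r + 1)) α g, bigMat_orth mp (3 ^ (r + 1)) α g⟩,
          bigMat_det mp (3 ^ (r + 1)) α g (hcube _)⟩
      map_one' := Subtype.ext (Subtype.ext (bigMat_one mp (3 ^ (r + 1)) α))
      map_mul' := fun g h => Subtype.ext (Subtype.ext (bigMat_mul mp (3 ^ (r + 1)) α g h)) }
  have hinj : Function.Injective F := by
    rw [injective_iff_map_eq_one]
    intro g hg
    refine bigMat_eq_one mp (3 ^ (r + 1)) α hcop g ?_
    exact congrArg
      (fun x : (SO 5) => ((x : Matrix.orthogonalGroup (Fin 5) ℝ) : Matrix (Fin 5) (Fin 5) ℝ)) hg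
  exact ⟨F.range, ⟨MonoidHom.ofInjective hinj⟩⟩
end
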